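/- arXiv:1605.07554 — 7 statements merged into one kernel-verified Lean document; each statement's English description precedes it below -/
import Mathlib

section
/- Let s ≥ 0 be real and let a, b, c, d, f, g, h : I → ℝ be continuous functions on an open interval I. Suppose μ : I → (0,∞) and α, β, γ, δ, ε, κ : I → ℝ are differentiable and satisfy on I the Riccati-type system: α' + b + 2cα + 4aα² = 0; β' + (c + 4aα)β = 0; γ' + aβ² = 0; δ' + (c + 4aα)δ = f + 2αg; ε' = (g − 2aδ)β; κ' = gδ − aδ² − h/μ^s; together with the relation μ' = 2μ(2aα + d). Then for every y ∈ ℝ the function ψ_y(x,t) = μ(t)^{−1/2} · exp(i(α(t)x² + β(t)xy + γ(t)y² + δ(t)x + ε(t)y + κ(t))) is C¹ in t and C² in x and satisfies at every (x,t) ∈ ℝ × I the variable-coefficient nonlinear Schrödinger equation i·∂ψ/∂t = −a(t)·∂²ψ/∂x² + (b(t)x² − f(t)x)ψ − i·c(t)·x·∂ψ/∂x − i·d(t)·ψ + i·g(t)·∂ψ/∂x + h(t)·|ψ|^{2s}·ψ. -/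
/-- Theorem 1(i), explicit-solution part: the ansatz `ψ_y = μ^{-1/2} e^{i S_y}` with
quadratic phase solves the variable-coefficient NLS, provided the coefficients of the
phase satisfy the Riccati-type system in which the nonlinearity is absorbed by `κ`. -/
theorem stmt0
    (s : ℝ) (hs : 0 ≤ s)
    (I : Set ℝ) (hIopen : IsOpen I) (hIconn : I.OrdConnected)
    (a b c d f g h : ℝ → ℝ)
    (ha : ContinuousOn a I) (hb : ContinuousOn b I) (hc : ContinuousOn c I)
    (hd : ContinuousOn d I) (hf : ContinuousOn f I) (hg : ContinuousOn g I)
    (hh : ContinuousOn h I)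
    (μ α β γ δ ε κ : ℝ → ℝ)
    (hμpos : ∀ t ∈ I, 0 < μ t)
    (hα : ∀ t ∈ I, HasDerivAt α (-(b t + 2 * c t * α t + 4 * a t * (α t) ^ 2)) t)
    (hβ : ∀ t ∈ I, HasDerivAt β (-((c t + 4 * a t * α t) * β t)) t)
    (hγ : ∀ t ∈ I, HasDerivAt γ (-(a t * (β t) ^ 2)) t)
    (hδ : ∀ t ∈ I, HasDerivAt δ (f t + 2 * α t * g t - (c t + 4 * a t * α t) * δ t) t)
    (hε : ∀ t ∈ I, HasDerivAt ε ((g t - 2 * a t * δ t) * β t) t)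
    (hκ : ∀ t ∈ I, HasDerivAt κ (g t * δ t - a t * (δ t) ^ 2 - h t / (μ t) ^ s) t)
    (hμ : ∀ t ∈ I, HasDerivAt μ (2 * μ t * (2 * a t * α t + d t)) t)
    (y : ℝ)
    (ψ : ℝ → ℝ → ℂ)
    (hψ : ∀ x t, ψ x t = ((μ t ^ (-(1 / 2 : ℝ)) : ℝ) : ℂ) *
      Complex.exp (Complex.I *
        ((α t * x ^ 2 + β t * x * y + γ t * y ^ 2 + δ t * x + ε t * y + κ t : ℝ) : ℂ))) :
    (∀ x : ℝ, ∀ t ∈ I, ContDiffAt ℝ 1 (fun τ => ψ x τ) t) ∧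
    (∀ t ∈ I, ContDiff ℝ 2 (fun x => ψ x t)) ∧
    (∀ x : ℝ, ∀ t ∈ I,
      Complex.I * deriv (fun τ => ψ x τ) t =
        -(a t : ℂ) * deriv (fun x' => deriv (fun x'' => ψ x'' t) x') x
        + ((b t : ℂ) * (x : ℂ) ^ 2 - (f t : ℂ) * (x : ℂ)) * ψ x t
        - Complex.I * (c t : ℂ) * (x : ℂ) * deriv (fun x' => ψ x' t) x
        - Complex.I * (d t : ℂ) * ψ x t
        + Complex.I * (g t : ℂ) * deriv (fun x' => ψ x' t) x
        + (h t : ℂ) * ((‖ψ x t‖ ^ (2 * s) : ℝ) : ℂ) * ψ x t) := by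
  -- spatial phase derivative
  have hSx : ∀ (t x : ℝ), HasDerivAt
      (fun x' : ℝ => α t * x' ^ 2 + β t * x' * y + γ t * y ^ 2 + δ t * x' + ε t * y + κ t)
      (2 * α t * x + β t * y + δ t) x := by
    intro t x
    have h1 : HasDerivAt (fun x' : ℝ => α t * x' ^ 2) (α t * (2 * x)) x := by
      simpa using (hasDerivAt_pow 2 x).const_mul (α t)
    have h2 : HasDerivAt (fun x' : ℝ => β t * x' * y) (β t * y) x := by
      simpa using ((hasDerivAt_id x).const_mul (β t)).mul_const y
    have h3 : HasDerivAt (fun x' : ℝ => δ t * x') (δ t) x := by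
      simpa using (hasDerivAt_id x).const_mul (δ t)
    have := ((((h1.add h2).add_const (γ t * y ^ 2)).add h3).add_const (ε t * y)).add_const (κ t)
    refine this.congr_deriv ?_
    ring
  -- first spatial derivative of ψ
  have hdx : ∀ (t x : ℝ), HasDerivAt (fun x' => ψ x' t)
      (Complex.I * ((2 * α t * x + β t * y + δ t : ℝ) : ℂ) * ψ x t) x := by
    intro t x
    have key := ((((hSx t x).ofReal_comp).const_mul Complex.I).cexp).const_mul
      ((μ t ^ (-(1 / 2 : ℝ)) : ℝ) : ℂ)
    simp only [hψ]
    refine key.congr_deriv ?_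
    ring
  -- second spatial derivative of ψ
  have hdx2 : ∀ (t x : ℝ), HasDerivAt (fun x' => deriv (fun x'' => ψ x'' t) x')
      (Complex.I * ((2 * α t : ℝ) : ℂ) * ψ x t
        + Complex.I * ((2 * α t * x + β t * y + δ t : ℝ) : ℂ) *
          (Complex.I * ((2 * α t * x + β t * y + δ t : ℝ) : ℂ) * ψ x t)) x := by
    intro t x
    have heq : (fun x' => deriv (fun x'' => ψ x'' t) x')
        = fun x' => Complex.I * ((2 * α t * x' + β t * y + δ t : ℝ) : ℂ) * ψ x' t :=
      funext fun x' => (hdx t x').deriv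
    rw [heq]
    have hr : HasDerivAt (fun x' : ℝ => 2 * α t * x' + β t * y + δ t) (2 * α t) x := by
      simpa using (((hasDerivAt_id x).const_mul (2 * α t)).add_const (β t * y)).add_const (δ t)
    have h1 : HasDerivAt (fun x' : ℝ => Complex.I * ((2 * α t * x' + β t * y + δ t : ℝ) : ℂ))
        (Complex.I * ((2 * α t : ℝ) : ℂ)) x := (hr.ofReal_comp).const_mul Complex.I
    have := h1.mul (hdx t x)
    exact this
  -- derivative of the amplitude
  have hA : ∀ t ∈ I, HasDerivAt (fun τ => μ τ ^ (-(1 / 2 : ℝ)))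
      (-(2 * a t * α t + d t) * μ t ^ (-(1 / 2 : ℝ))) t := by
    intro t ht
    have h0 : HasDerivAt (fun u : ℝ => u ^ (-(1 / 2 : ℝ)))
        (-(1 / 2 : ℝ) * μ t ^ (-(1 / 2 : ℝ) - 1)) (μ t) :=
      Real.hasDerivAt_rpow_const (Or.inl (hμpos t ht).ne')
    have h1 := h0.comp t (hμ t ht)
    refine h1.congr_deriv ?_
    rw [Real.rpow_sub (hμpos t ht), Real.rpow_one]
    field_simp [(hμpos t ht).ne']
  -- time derivative of the phase
  have hSt : ∀ (x : ℝ), ∀ t ∈ I, HasDerivAt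
      (fun τ => α τ * x ^ 2 + β τ * x * y + γ τ * y ^ 2 + δ τ * x + ε τ * y + κ τ)
      (-(b t + 2 * c t * α t + 4 * a t * (α t) ^ 2) * x ^ 2
        + -((c t + 4 * a t * α t) * β t) * x * y
        + -(a t * (β t) ^ 2) * y ^ 2
        + (f t + 2 * α t * g t - (c t + 4 * a t * α t) * δ t) * x
        + (g t - 2 * a t * δ t) * β t * y
        + (g t * δ t - a t * (δ t) ^ 2 - h t / (μ t) ^ s)) t := by
    intro x t ht
    exact ((((((hα t ht).mul_const (x ^ 2)).add
      (((hβ t ht).mul_const x).mul_const y)).add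
      ((hγ t ht).mul_const (y ^ 2))).add
      ((hδ t ht).mul_const x)).add
      ((hε t ht).mul_const y)).add (hκ t ht)
  -- time derivative of ψ
  have hdt : ∀ (x : ℝ), ∀ t ∈ I, HasDerivAt (fun τ => ψ x τ)
      (((-(2 * a t * α t + d t) * μ t ^ (-(1 / 2 : ℝ)) : ℝ) : ℂ) *
        Complex.exp (Complex.I *
          ((α t * x ^ 2 + β t * x * y + γ t * y ^ 2 + δ t * x + ε t * y + κ t : ℝ) : ℂ))
      + ((μ t ^ (-(1 / 2 : ℝ)) : ℝ) : ℂ) *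
        (Complex.exp (Complex.I *
          ((α t * x ^ 2 + β t * x * y + γ t * y ^ 2 + δ t * x + ε t * y + κ t : ℝ) : ℂ)) *
          (Complex.I * ((-(b t + 2 * c t * α t + 4 * a t * (α t) ^ 2) * x ^ 2
            + -((c t + 4 * a t * α t) * β t) * x * y
            + -(a t * (β t) ^ 2) * y ^ 2
            + (f t + 2 * α t * g t - (c t + 4 * a t * α t) * δ t) * x
            + (g t - 2 * a t * δ t) * β t * y
            + (g t * δ t - a t * (δ t) ^ 2 - h t / (μ t) ^ s) : ℝ) : ℂ)))) t := by
    intro x t ht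
    have h1 := (((hSt x t ht).ofReal_comp).const_mul Complex.I).cexp
    have h2 := (hA t ht).ofReal_comp
    have := h2.mul h1
    simp only [hψ]
    exact this
  refine ⟨?_, ?_, ?_⟩
  · -- C¹ in time
    intro x t ht
    -- continuity of all the coefficient functions on I
    have hμc : ContinuousOn μ I := fun τ hτ => (hμ τ hτ).continuousAt.continuousWithinAt
    have hαc : ContinuousOn α I := fun τ hτ => (hα τ hτ).continuousAt.continuousWithinAt
    have hβc : ContinuousOn β I := fun τ hτ => (hβ τ hτ).continuousAt.continuousWithinAt
    have hγc : ContinuousOn γ I := fun τ hτ => (hγ τ hτ).continuousAt.continuousWithinAt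
    have hδc : ContinuousOn δ I := fun τ hτ => (hδ τ hτ).continuousAt.continuousWithinAt
    have hεc : ContinuousOn ε I := fun τ hτ => (hε τ hτ).continuousAt.continuousWithinAt
    have hκc : ContinuousOn κ I := fun τ hτ => (hκ τ hτ).continuousAt.continuousWithinAt
    have hAc : ContinuousOn (fun τ => μ τ ^ (-(1 / 2 : ℝ))) I :=
      hμc.rpow_const fun τ hτ => Or.inl (hμpos τ hτ).ne'
    have hμsne : ∀ τ ∈ I, (μ τ) ^ s ≠ 0 := fun τ hτ =>
      (Real.rpow_pos_of_pos (hμpos τ hτ) s).ne'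
    have hμsc : ContinuousOn (fun τ => (μ τ) ^ s) I := hμc.rpow_const fun τ hτ => Or.inr hs
    have hSc : ContinuousOn
        (fun τ => α τ * x ^ 2 + β τ * x * y + γ τ * y ^ 2 + δ τ * x + ε τ * y + κ τ) I := by
      exact (((((hαc.mul continuousOn_const).add
        ((hβc.mul continuousOn_const).mul continuousOn_const)).add
        (hγc.mul continuousOn_const)).add
        (hδc.mul continuousOn_const)).add
        (hεc.mul continuousOn_const)).add hκc
    have hStc : ContinuousOn (fun τ : ℝ =>
        (-(b τ + 2 * c τ * α τ + 4 * a τ * (α τ) ^ 2) * x ^ 2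
          + -((c τ + 4 * a τ * α τ) * β τ) * x * y
          + -(a τ * (β τ) ^ 2) * y ^ 2
          + (f τ + 2 * α τ * g τ - (c τ + 4 * a τ * α τ) * δ τ) * x
          + (g τ - 2 * a τ * δ τ) * β τ * y
          + (g τ * δ τ - a τ * (δ τ) ^ 2 - h τ / (μ τ) ^ s))) I := by
      apply ContinuousOn.add
      apply ContinuousOn.add
      apply ContinuousOn.add
      apply ContinuousOn.add
      apply ContinuousOn.add
      · exact ((hb.add ((continuousOn_const.mul hc).mul hαc)).add
          ((continuousOn_const.mul ha).mul (hαc.pow 2))).neg.mul continuousOn_const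
      · exact (((hc.add ((continuousOn_const.mul ha).mul hαc)).mul hβc).neg.mul
          continuousOn_const).mul continuousOn_const
      · exact (ha.mul (hβc.pow 2)).neg.mul continuousOn_const
      · exact ((hf.add ((continuousOn_const.mul hαc).mul hg)).sub
          ((hc.add ((continuousOn_const.mul ha).mul hαc)).mul hδc)).mul continuousOn_const
      · exact ((hg.sub ((continuousOn_const.mul ha).mul hδc)).mul hβc).mul continuousOn_const
      · exact ((hg.mul hδc).sub (ha.mul (hδc.pow 2))).sub (hh.div hμsc hμsne)
    have hExpc : ContinuousOn (fun τ => Complex.exp (Complex.I *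
        ((α τ * x ^ 2 + β τ * x * y + γ τ * y ^ 2 + δ τ * x + ε τ * y + κ τ : ℝ) : ℂ))) I :=
      Complex.continuous_exp.comp_continuousOn
        (continuousOn_const.mul (Complex.continuous_ofReal.comp_continuousOn hSc))
    have hGc : ContinuousOn (fun τ : ℝ =>
        (((-(2 * a τ * α τ + d τ) * μ τ ^ (-(1 / 2 : ℝ)) : ℝ) : ℂ) *
          Complex.exp (Complex.I *
            ((α τ * x ^ 2 + β τ * x * y + γ τ * y ^ 2 + δ τ * x + ε τ * y + κ τ : ℝ) : ℂ))
        + ((μ τ ^ (-(1 / 2 : ℝ)) : ℝ) : ℂ) *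
          (Complex.exp (Complex.I *
            ((α τ * x ^ 2 + β τ * x * y + γ τ * y ^ 2 + δ τ * x + ε τ * y + κ τ : ℝ) : ℂ)) *
            (Complex.I * ((-(b τ + 2 * c τ * α τ + 4 * a τ * (α τ) ^ 2) * x ^ 2
              + -((c τ + 4 * a τ * α τ) * β τ) * x * y
              + -(a τ * (β τ) ^ 2) * y ^ 2
              + (f τ + 2 * α τ * g τ - (c τ + 4 * a τ * α τ) * δ τ) * x
              + (g τ - 2 * a τ * δ τ) * β τ * y
              + (g τ * δ τ - a τ * (δ τ) ^ 2 - h τ / (μ τ) ^ s) : ℝ) : ℂ))))) I := by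
      apply ContinuousOn.add
      · exact (Complex.continuous_ofReal.comp_continuousOn
          ((((continuousOn_const.mul ha).mul hαc).add hd).neg.mul hAc)).mul hExpc
      · exact (Complex.continuous_ofReal.comp_continuousOn hAc).mul
          (hExpc.mul (continuousOn_const.mul
            (Complex.continuous_ofReal.comp_continuousOn hStc)))
    have hco : ContDiffOn ℝ (0 + 1) (fun τ => ψ x τ) I := by
      rw [contDiffOn_succ_iff_deriv_of_isOpen hIopen]
      refine ⟨fun τ hτ => (hdt x τ hτ).differentiableAt.differentiableWithinAt,
        by simp, ?_⟩
      rw [contDiffOn_zero]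
      exact hGc.congr fun τ hτ => (hdt x τ hτ).deriv
    have : ContDiffOn ℝ 1 (fun τ => ψ x τ) I := by
      rw [show (1 : WithTop ℕ∞) = 0 + 1 from (zero_add 1).symm]
      exact hco
    exact this.contDiffAt (hIopen.mem_nhds ht)
  · -- C² in space
    intro t ht
    have hpoly : ContDiff ℝ 2
        (fun x : ℝ => α t * x ^ 2 + β t * x * y + γ t * y ^ 2 + δ t * x + ε t * y + κ t) := by
      exact (((((contDiff_const.mul (contDiff_id.pow 2)).add
        ((contDiff_const.mul contDiff_id).mul contDiff_const)).add
        contDiff_const).add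
        (contDiff_const.mul contDiff_id)).add
        contDiff_const).add contDiff_const
    have : ContDiff ℝ 2 (fun x : ℝ => ((μ t ^ (-(1 / 2 : ℝ)) : ℝ) : ℂ) *
        Complex.exp (Complex.I *
          ((α t * x ^ 2 + β t * x * y + γ t * y ^ 2 + δ t * x + ε t * y + κ t : ℝ) : ℂ))) := by
      exact contDiff_const.mul ((Complex.contDiff_exp (𝕜 := ℝ)).comp
        (contDiff_const.mul (Complex.ofRealCLM.contDiff.comp hpoly)))
    convert this using 1
    funext x
    exact hψ x t
  · -- the PDE
    intro x t ht
    have habs : ((‖ψ x t‖ ^ (2 * s) : ℝ) : ℂ) = ((((μ t) ^ s)⁻¹ : ℝ) : ℂ) := by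
      have h1 : ‖ψ x t‖ = μ t ^ (-(1 / 2 : ℝ)) := by
        rw [hψ, norm_mul, Complex.norm_real, Real.norm_eq_abs, mul_comm Complex.I,
          Complex.norm_exp_ofReal_mul_I, mul_one,
          abs_of_pos (Real.rpow_pos_of_pos (hμpos t ht) _)]
      rw [h1, ← Real.rpow_mul (hμpos t ht).le,
        show (-(1 / 2 : ℝ)) * (2 * s) = -s by ring, Real.rpow_neg (hμpos t ht).le]
    have keyR : (-(b t + 2 * c t * α t + 4 * a t * (α t) ^ 2) * x ^ 2
          + -((c t + 4 * a t * α t) * β t) * x * y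
          + -(a t * (β t) ^ 2) * y ^ 2
          + (f t + 2 * α t * g t - (c t + 4 * a t * α t) * δ t) * x
          + (g t - 2 * a t * δ t) * β t * y
          + (g t * δ t - a t * (δ t) ^ 2 - h t / (μ t) ^ s))
        = -(a t * (2 * α t * x + β t * y + δ t) ^ 2 + b t * x ^ 2 - f t * x
            + c t * x * (2 * α t * x + β t * y + δ t)
            - g t * (2 * α t * x + β t * y + δ t)
            + h t * ((μ t) ^ s)⁻¹) := by
      rw [div_eq_mul_inv]
      ring
    have keyC := congrArg (fun r : ℝ => (r : ℂ)) keyR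
    rw [(hdt x t ht).deriv, (hdx2 t x).deriv, (hdx t x).deriv, habs, hψ x t]
    linear_combination (norm := (push_cast; ring1)) ((μ t ^ (-(1 / 2 : ℝ)) : ℝ) : ℂ) * Complex.exp (Complex.I *
        ((α t * x ^ 2 + β t * x * y + γ t * y ^ 2 + δ t * x + ε t * y + κ t : ℝ) : ℂ)) *
        (Complex.I ^ 2 * keyC
          + ((f t : ℂ) * x - (b t : ℂ) * x ^ 2 - (h t : ℂ) * (((μ t ^ s : ℝ) : ℂ))⁻¹) *
            Complex.I_sq)
end

section
/- Let s ≥ 0 be real, l₀ ∈ {−1, 1}, λ ∈ ℝ, and let a, b, c, d, f, g : I → ℝ be continuous functions on an open interval I. Suppose μ : I → (0,∞) and α, β, γ, δ, ε, κ : I → ℝ are differentiable and satisfy on I: α' + b + 2cα + 4aα² = 0; β' + (c + 4aα)β = 0; γ' + l₀·aβ² = 0; δ' + (c + 4aα)δ = f + 2αg; ε' = (g − 2aδ)β; κ' = gδ − aδ²; together with μ' = 2μ(2aα + d). Set h(t) = λ·a(t)·β(t)²·μ(t)^s. If χ : ℝ × ℝ → ℂ, written as a function χ(ξ,τ), is C²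 and satisfies i·∂χ/∂τ − l₀·∂²χ/∂ξ² + l₀·λ·|χ|^{2s}·χ = 0 everywhere, then the function ψ(x,t) = μ(t)^{−1/2} · e^{i(α(t)x² + δ(t)x + κ(t))} · χ(β(t)x + ε(t), γ(t)) satisfies at every (x,t) ∈ ℝ × I the equation i·∂ψ/∂t = −a·∂²ψ/∂x² + (b·x² − f·x)ψ − i·c·x·∂ψ/∂x − i·d·ψ + i·g·∂ψ/∂x + h(t)·|ψ|^{2s}·ψ. -/
/-- The generalized lens transformation (Theorem 1(ii) / appendix lemma with
parameter `l₀ = ±1`): if `χ` solves the autonomous NLS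
`i χ_τ - l₀ χ_ξξ + l₀ λ |χ|^{2s} χ = 0`, then
`ψ(x,t) = μ(t)^{-1/2} e^{i(α x² + δ x + κ)} χ(βx + ε, γ)` solves the
variable-coefficient NLS with `h(t) = λ a(t) β(t)² μ(t)^s`. -/
theorem stmt3
    (s : ℝ) (hs : 0 ≤ s)
    (l₀ : ℝ) (hl₀ : l₀ = 1 ∨ l₀ = -1)
    (lam : ℝ)
    (I : Set ℝ) (hIopen : IsOpen I) (hIconn : I.OrdConnected)
    (a b c d f g : ℝ → ℝ)
    (ha : ContinuousOn a I) (hb : ContinuousOn b I) (hc : ContinuousOn c I)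
    (hd : ContinuousOn d I) (hf : ContinuousOn f I) (hg : ContinuousOn g I)
    (μ α β γ δ ε κ : ℝ → ℝ)
    (hμpos : ∀ t ∈ I, 0 < μ t)
    (hα : ∀ t ∈ I, HasDerivAt α (-(b t + 2 * c t * α t + 4 * a t * (α t) ^ 2)) t)
    (hβ : ∀ t ∈ I, HasDerivAt β (-((c t + 4 * a t * α t) * β t)) t)
    (hγ : ∀ t ∈ I, HasDerivAt γ (-(l₀ * a t * (β t) ^ 2)) t)
    (hδ : ∀ t ∈ I, HasDerivAt δ (f t + 2 * α t * g t - (c t + 4 * a t * α t) * δ t) t)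
    (hε : ∀ t ∈ I, HasDerivAt ε ((g t - 2 * a t * δ t) * β t) t)
    (hκ : ∀ t ∈ I, HasDerivAt κ (g t * δ t - a t * (δ t) ^ 2) t)
    (hμ : ∀ t ∈ I, HasDerivAt μ (2 * μ t * (2 * a t * α t + d t)) t)
    (h : ℝ → ℝ) (hh : ∀ t, h t = lam * a t * (β t) ^ 2 * (μ t) ^ s)
    (χ : ℝ → ℝ → ℂ)
    (hχsmooth : ContDiff ℝ 2 (fun p : ℝ × ℝ => χ p.1 p.2))
    (hχ : ∀ ξ τ : ℝ,
      Complex.I * deriv (fun τ' => χ ξ τ') τ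
        - (l₀ : ℂ) * deriv (fun ξ' => deriv (fun ξ'' => χ ξ'' τ) ξ') ξ
        + (l₀ : ℂ) * (lam : ℂ) * ((‖χ ξ τ‖ ^ (2 * s) : ℝ) : ℂ) * χ ξ τ = 0)
    (ψ : ℝ → ℝ → ℂ)
    (hψ : ∀ x t, ψ x t = ((μ t ^ (-(1 / 2 : ℝ)) : ℝ) : ℂ) *
      Complex.exp (Complex.I * ((α t * x ^ 2 + δ t * x + κ t : ℝ) : ℂ)) *
      χ (β t * x + ε t) (γ t)) :
    ∀ x : ℝ, ∀ t ∈ I,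
      Complex.I * deriv (fun τ => ψ x τ) t =
        -(a t : ℂ) * deriv (fun x' => deriv (fun x'' => ψ x'' t) x') x
        + ((b t : ℂ) * (x : ℂ) ^ 2 - (f t : ℂ) * (x : ℂ)) * ψ x t
        - Complex.I * (c t : ℂ) * (x : ℂ) * deriv (fun x' => ψ x' t) x
        - Complex.I * (d t : ℂ) * ψ x t
        + Complex.I * (g t : ℂ) * deriv (fun x' => ψ x' t) x
        + (h t : ℂ) * ((‖ψ x t‖ ^ (2 * s) : ℝ) : ℂ) * ψ x t := by
  intro x t ht
  set F : ℝ × ℝ → ℂ := fun p => χ p.1 p.2 with hFdef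
  have hFd : Differentiable ℝ F := hχsmooth.differentiable (by norm_num)
  -- first partial derivatives
  have key1 : ∀ (u v : ℝ), HasDerivAt (fun y => χ y v) (fderiv ℝ F (u, v) (1, 0)) u := by
    intro u v
    have h1 : HasDerivAt (fun y : ℝ => (y, v)) ((1 : ℝ), (0 : ℝ)) u :=
      (hasDerivAt_id u).prodMk (hasDerivAt_const u v)
    exact (hFd (u, v)).hasFDerivAt.comp_hasDerivAt u h1
  have key2 : ∀ (u v : ℝ), HasDerivAt (fun y => χ u y) (fderiv ℝ F (u, v) (0, 1)) v := by
    intro u v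
    have h1 : HasDerivAt (fun y : ℝ => (u, y)) ((0 : ℝ), (1 : ℝ)) v :=
      (hasDerivAt_const v u).prodMk (hasDerivAt_id v)
    exact (hFd (u, v)).hasFDerivAt.comp_hasDerivAt v h1
  -- chain rule
  have keyc : ∀ (p q : ℝ → ℝ) (p' q' t0 : ℝ), HasDerivAt p p' t0 → HasDerivAt q q' t0 →
      HasDerivAt (fun y => χ (p y) (q y))
        ((p' : ℂ) * fderiv ℝ F (p t0, q t0) (1, 0)
          + (q' : ℂ) * fderiv ℝ F (p t0, q t0) (0, 1)) t0 := by
    intro p q p' q' t0 hp hq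
    have h1 : HasDerivAt (fun y => (p y, q y)) ((p', q') : ℝ × ℝ) t0 := hp.prodMk hq
    have h2 := (hFd (p t0, q t0)).hasFDerivAt.comp_hasDerivAt t0 h1
    refine h2.congr_deriv ?_
    have h3 : ((p', q') : ℝ × ℝ) = p' • ((1 : ℝ), (0 : ℝ)) + q' • ((0 : ℝ), (1 : ℝ)) := by
      simp [Prod.ext_iff]
    rw [h3, map_add, map_smul, map_smul, Complex.real_smul, Complex.real_smul]
  -- differentiability of the first partial in the first variable
  have hfC1 : ContDiff ℝ 1 (fderiv ℝ F) := hχsmooth.fderiv_right (by norm_num)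
  have key11 : ∀ (u v : ℝ), HasDerivAt (fun y => fderiv ℝ F (y, v) (1, 0))
      (deriv (fun y => fderiv ℝ F (y, v) (1, 0)) u) u := by
    intro u v
    refine DifferentiableAt.hasDerivAt ?_
    have h1 : Differentiable ℝ (fun y : ℝ => (y, v)) :=
      differentiable_id.prodMk (differentiable_const v)
    exact ((ContinuousLinearMap.apply ℝ ℂ ((1 : ℝ), (0 : ℝ))).differentiable.comp
      ((hfC1.differentiable (by norm_num)).comp h1)) u
  -- exponential factor: spatial derivative
  have hE : ∀ (x' : ℝ), HasDerivAt
      (fun y : ℝ => Complex.exp (Complex.I * ((α t * y ^ 2 + δ t * y + κ t : ℝ) : ℂ)))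
      (Complex.exp (Complex.I * ((α t * x' ^ 2 + δ t * x' + κ t : ℝ) : ℂ)) *
        (Complex.I * ((2 * α t * x' + δ t : ℝ) : ℂ))) x' := by
    intro x'
    have h1 : HasDerivAt (fun y : ℝ => α t * y ^ 2 + δ t * y + κ t) (2 * α t * x' + δ t) x' := by
      have := (((hasDerivAt_pow 2 x').const_mul (α t)).add
        ((hasDerivAt_id x').const_mul (δ t))).add_const (κ t)
      exact this.congr_deriv (by ring)
    exact (h1.ofReal_comp.const_mul Complex.I).cexp
  -- χ factor : spatial derivative
  have hCx : ∀ (x' : ℝ), HasDerivAt (fun y => χ (β t * y + ε t) (γ t))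
      ((β t : ℂ) * fderiv ℝ F (β t * x' + ε t, γ t) (1, 0)) x' := by
    intro x'
    have hp : HasDerivAt (fun y : ℝ => β t * y + ε t) (β t) x' := by
      simpa using ((hasDerivAt_id x').const_mul (β t)).add_const (ε t)
    have := keyc _ _ _ _ _ hp (hasDerivAt_const x' (γ t))
    simpa using this
  -- first spatial derivative of ψ
  have hSx : ∀ (x' : ℝ), HasDerivAt (fun y => ψ y t)
      (((μ t ^ (-(1 / 2 : ℝ)) : ℝ) : ℂ) *
        (Complex.exp (Complex.I * ((α t * x' ^ 2 + δ t * x' + κ t : ℝ) : ℂ)) *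
          ((Complex.I * ((2 * α t * x' + δ t : ℝ) : ℂ)) * χ (β t * x' + ε t) (γ t)
            + (β t : ℂ) * fderiv ℝ F (β t * x' + ε t, γ t) (1, 0)))) x' := by
    intro x'
    have hfeq : (fun y => ψ y t) = fun y => ((μ t ^ (-(1 / 2 : ℝ)) : ℝ) : ℂ) *
        (Complex.exp (Complex.I * ((α t * y ^ 2 + δ t * y + κ t : ℝ) : ℂ)) *
          χ (β t * y + ε t) (γ t)) := funext fun y => by rw [hψ]; ring
    rw [hfeq]
    have := ((hE x').mul (hCx x')).const_mul ((μ t ^ (-(1 / 2 : ℝ)) : ℝ) : ℂ)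
    exact this.congr_deriv (by beta_reduce; ring)
  -- second spatial derivative of ψ at x
  have hfun1 : (fun x' => deriv (fun x'' => ψ x'' t) x') =
      (fun x' => ((μ t ^ (-(1 / 2 : ℝ)) : ℝ) : ℂ) *
        (Complex.exp (Complex.I * ((α t * x' ^ 2 + δ t * x' + κ t : ℝ) : ℂ)) *
          ((Complex.I * ((2 * α t * x' + δ t : ℝ) : ℂ)) * χ (β t * x' + ε t) (γ t)
            + (β t : ℂ) * fderiv ℝ F (β t * x' + ε t, γ t) (1, 0)))) :=
    funext fun x' => (hSx x').deriv
  have hQ : HasDerivAt (fun y : ℝ => Complex.I * ((2 * α t * y + δ t : ℝ) : ℂ))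
      (Complex.I * ((2 * α t : ℝ) : ℂ)) x := by
    have h1 : HasDerivAt (fun y : ℝ => 2 * α t * y + δ t) (2 * α t) x := by
      simpa using ((hasDerivAt_id x).const_mul (2 * α t)).add_const (δ t)
    exact h1.ofReal_comp.const_mul Complex.I
  have hP1x : HasDerivAt (fun y => fderiv ℝ F (β t * y + ε t, γ t) (1, 0))
      ((β t : ℂ) * deriv (fun y => fderiv ℝ F (y, γ t) (1, 0)) (β t * x + ε t)) x := by
    have hp : HasDerivAt (fun y : ℝ => β t * y + ε t) (β t) x := by
      simpa using ((hasDerivAt_id x).const_mul (β t)).add_const (ε t)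
    have := (key11 (β t * x + ε t) (γ t)).scomp x hp
    simpa [Complex.real_smul, Function.comp_def] using this
  have hSxx : deriv (fun x' => deriv (fun x'' => ψ x'' t) x') x =
      ((μ t ^ (-(1 / 2 : ℝ)) : ℝ) : ℂ) *
        (Complex.exp (Complex.I * ((α t * x ^ 2 + δ t * x + κ t : ℝ) : ℂ)) *
          ((Complex.I * ((2 * α t * x + δ t : ℝ) : ℂ)) *
            ((Complex.I * ((2 * α t * x + δ t : ℝ) : ℂ)) * χ (β t * x + ε t) (γ t)
              + (β t : ℂ) * fderiv ℝ F (β t * x + ε t, γ t) (1, 0))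
          + (Complex.I * ((2 * α t : ℝ) : ℂ) * χ (β t * x + ε t) (γ t)
            + (Complex.I * ((2 * α t * x + δ t : ℝ) : ℂ)) *
              ((β t : ℂ) * fderiv ℝ F (β t * x + ε t, γ t) (1, 0))
            + (β t : ℂ) * ((β t : ℂ) *
              deriv (fun y => fderiv ℝ F (y, γ t) (1, 0)) (β t * x + ε t))))) := by
    rw [hfun1]
    have hin : HasDerivAt (fun y =>
        (Complex.I * ((2 * α t * y + δ t : ℝ) : ℂ)) * χ (β t * y + ε t) (γ t)
          + (β t : ℂ) * fderiv ℝ F (β t * y + ε t, γ t) (1, 0))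
        (Complex.I * ((2 * α t : ℝ) : ℂ) * χ (β t * x + ε t) (γ t)
          + (Complex.I * ((2 * α t * x + δ t : ℝ) : ℂ)) *
            ((β t : ℂ) * fderiv ℝ F (β t * x + ε t, γ t) (1, 0))
          + (β t : ℂ) * ((β t : ℂ) *
            deriv (fun y => fderiv ℝ F (y, γ t) (1, 0)) (β t * x + ε t))) x := by
      exact (hQ.mul (hCx x)).add (hP1x.const_mul (β t : ℂ))
    have := ((hE x).mul hin).const_mul ((μ t ^ (-(1 / 2 : ℝ)) : ℝ) : ℂ)
    simp only [Pi.mul_apply] at this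
    rw [this.deriv]
    ring
  -- time derivative of the amplitude
  have hMt : HasDerivAt (fun t' => ((μ t' ^ (-(1 / 2 : ℝ)) : ℝ) : ℂ))
      ((-(2 * a t * α t + d t) * μ t ^ (-(1 / 2 : ℝ)) : ℝ) : ℂ) t := by
    refine HasDerivAt.ofReal_comp ?_
    have h1 := (hμ t ht).rpow_const (p := -(1 / 2 : ℝ)) (Or.inl (hμpos t ht).ne')
    convert h1 using 1
    rw [show (-(1 / 2 : ℝ)) - 1 = -(3 / 2 : ℝ) by norm_num,
      show (-(1 / 2 : ℝ)) = -(3 / 2 : ℝ) + 1 by norm_num,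
      Real.rpow_add (hμpos t ht), Real.rpow_one]
    ring
  -- time derivative of the exponential factor
  have hEt : HasDerivAt
      (fun t' => Complex.exp (Complex.I * ((α t' * x ^ 2 + δ t' * x + κ t' : ℝ) : ℂ)))
      (Complex.exp (Complex.I * ((α t * x ^ 2 + δ t * x + κ t : ℝ) : ℂ)) *
        (Complex.I * ((-(b t + 2 * c t * α t + 4 * a t * (α t) ^ 2) * x ^ 2
          + (f t + 2 * α t * g t - (c t + 4 * a t * α t) * δ t) * x
          + (g t * δ t - a t * (δ t) ^ 2) : ℝ) : ℂ))) t := by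
    have h1 : HasDerivAt (fun t' => α t' * x ^ 2 + δ t' * x + κ t')
        (-(b t + 2 * c t * α t + 4 * a t * (α t) ^ 2) * x ^ 2
          + (f t + 2 * α t * g t - (c t + 4 * a t * α t) * δ t) * x
          + (g t * δ t - a t * (δ t) ^ 2)) t :=
      (((hα t ht).mul_const (x ^ 2)).add ((hδ t ht).mul_const x)).add (hκ t ht)
    exact (h1.ofReal_comp.const_mul Complex.I).cexp
  -- time derivative of the χ factor
  have hCt : HasDerivAt (fun t' => χ (β t' * x + ε t') (γ t'))
      (((-((c t + 4 * a t * α t) * β t) * x + (g t - 2 * a t * δ t) * β t : ℝ) : ℂ) *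
          fderiv ℝ F (β t * x + ε t, γ t) (1, 0)
        + ((-(l₀ * a t * (β t) ^ 2) : ℝ) : ℂ) * fderiv ℝ F (β t * x + ε t, γ t) (0, 1)) t :=
    keyc _ _ _ _ _ (((hβ t ht).mul_const x).add (hε t ht)) (hγ t ht)
  -- time derivative of ψ
  have hTt : HasDerivAt (fun t' => ψ x t')
      ((((-(2 * a t * α t + d t) * μ t ^ (-(1 / 2 : ℝ)) : ℝ) : ℂ) *
          Complex.exp (Complex.I * ((α t * x ^ 2 + δ t * x + κ t : ℝ) : ℂ))
        + ((μ t ^ (-(1 / 2 : ℝ)) : ℝ) : ℂ) *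
          (Complex.exp (Complex.I * ((α t * x ^ 2 + δ t * x + κ t : ℝ) : ℂ)) *
            (Complex.I * ((-(b t + 2 * c t * α t + 4 * a t * (α t) ^ 2) * x ^ 2
              + (f t + 2 * α t * g t - (c t + 4 * a t * α t) * δ t) * x
              + (g t * δ t - a t * (δ t) ^ 2) : ℝ) : ℂ)))) * χ (β t * x + ε t) (γ t)
        + ((μ t ^ (-(1 / 2 : ℝ)) : ℝ) : ℂ) *
            Complex.exp (Complex.I * ((α t * x ^ 2 + δ t * x + κ t : ℝ) : ℂ)) *
          (((-((c t + 4 * a t * α t) * β t) * x + (g t - 2 * a t * δ t) * β t : ℝ) : ℂ) *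
              fderiv ℝ F (β t * x + ε t, γ t) (1, 0)
            + ((-(l₀ * a t * (β t) ^ 2) : ℝ) : ℂ) *
              fderiv ℝ F (β t * x + ε t, γ t) (0, 1))) t := by
    have hfeq : (fun t' => ψ x t') = fun t' => ((μ t' ^ (-(1 / 2 : ℝ)) : ℝ) : ℂ) *
        Complex.exp (Complex.I * ((α t' * x ^ 2 + δ t' * x + κ t' : ℝ) : ℂ)) *
        χ (β t' * x + ε t') (γ t') := funext fun t' => hψ x t'
    rw [hfeq]
    exact (hMt.mul hEt).mul hCt
  -- modulus computation
  have habs : ‖ψ x t‖ ^ (2 * s) =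
      μ t ^ (-s) * ‖χ (β t * x + ε t) (γ t)‖ ^ (2 * s) := by
    rw [hψ, norm_mul, norm_mul, Complex.norm_real, Real.norm_eq_abs, Complex.norm_exp]
    have h1 : (Complex.I * ((α t * x ^ 2 + δ t * x + κ t : ℝ) : ℂ)).re = 0 := by
      rw [Complex.mul_re, Complex.I_re, Complex.I_im, Complex.ofReal_re, Complex.ofReal_im]
      ring
    rw [h1, Real.exp_zero, mul_one,
      abs_of_pos (Real.rpow_pos_of_pos (hμpos t ht) _),
      Real.mul_rpow (Real.rpow_nonneg (hμpos t ht).le _) (norm_nonneg _),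
      ← Real.rpow_mul (hμpos t ht).le, show (-(1 / 2 : ℝ)) * (2 * s) = -s by ring]
  -- coefficient identity
  have hcoef : h t * μ t ^ (-s) = lam * a t * (β t) ^ 2 := by
    rw [hh, mul_assoc, ← Real.rpow_add (hμpos t ht)]
    simp
  -- NLS at the transformed point
  have hP2d : deriv (fun τ' => χ (β t * x + ε t) τ') (γ t) =
      fderiv ℝ F (β t * x + ε t, γ t) (0, 1) := (key2 _ _).deriv
  have hP11d : deriv (fun ξ' => deriv (fun ξ'' => χ ξ'' (γ t)) ξ') (β t * x + ε t) =
      deriv (fun y => fderiv ℝ F (y, γ t) (1, 0)) (β t * x + ε t) := by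
    congr 1
    funext ξ'
    exact (key1 ξ' (γ t)).deriv
  have hnls := hχ (β t * x + ε t) (γ t)
  rw [hP2d, hP11d] at hnls
  -- assemble
  rw [hTt.deriv, (hSx x).deriv, hSxx, habs, hh, hψ]
  have hμs : ((μ t ^ s : ℝ) : ℂ) * ((μ t ^ (-s) : ℝ) : ℂ) = 1 := by
    rw [← Complex.ofReal_mul, ← Real.rpow_add (hμpos t ht)]
    simp
  rcases hl₀ with rfl | rfl
  · push_cast at hnls ⊢
    linear_combination (((μ t ^ (-(1 / 2 : ℝ)) : ℝ) : ℂ) *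
        Complex.exp (Complex.I * ((α t : ℂ) * (x:ℂ) ^ 2 + (δ t : ℂ) * (x:ℂ) + (κ t : ℂ))) *
        (-((a t : ℂ) * (β t : ℂ) ^ 2))) * hnls -
      ((lam : ℂ) * (a t : ℂ) * (β t : ℂ) ^ 2 *
        ((‖χ (β t * x + ε t) (γ t)‖ ^ (2 * s) : ℝ) : ℂ) *
        (((μ t ^ (-(1 / 2 : ℝ)) : ℝ) : ℂ) *
          Complex.exp (Complex.I * ((α t : ℂ) * (x:ℂ) ^ 2 + (δ t : ℂ) * (x:ℂ) + (κ t : ℂ))) *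
          χ (β t * x + ε t) (γ t))) * hμs +
      (((f t : ℂ) * (x:ℂ) - (b t : ℂ) * (x:ℂ) ^ 2) *
        (((μ t ^ (-(1 / 2 : ℝ)) : ℝ) : ℂ) *
          Complex.exp (Complex.I * ((α t : ℂ) * (x:ℂ) ^ 2 + (δ t : ℂ) * (x:ℂ) + (κ t : ℂ))) *
          χ (β t * x + ε t) (γ t))) * Complex.I_sq
  · push_cast at hnls ⊢
    linear_combination (((μ t ^ (-(1 / 2 : ℝ)) : ℝ) : ℂ) *
        Complex.exp (Complex.I * ((α t : ℂ) * (x:ℂ) ^ 2 + (δ t : ℂ) * (x:ℂ) + (κ t : ℂ))) *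
        ((a t : ℂ) * (β t : ℂ) ^ 2)) * hnls -
      ((lam : ℂ) * (a t : ℂ) * (β t : ℂ) ^ 2 *
        ((‖χ (β t * x + ε t) (γ t)‖ ^ (2 * s) : ℝ) : ℂ) *
        (((μ t ^ (-(1 / 2 : ℝ)) : ℝ) : ℂ) *
          Complex.exp (Complex.I * ((α t : ℂ) * (x:ℂ) ^ 2 + (δ t : ℂ) * (x:ℂ) + (κ t : ℂ))) *
          χ (β t * x + ε t) (γ t))) * hμs +
      (((f t : ℂ) * (x:ℂ) - (b t : ℂ) * (x:ℂ) ^ 2) *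
        (((μ t ^ (-(1 / 2 : ℝ)) : ℝ) : ℂ) *
          Complex.exp (Complex.I * ((α t : ℂ) * (x:ℂ) ^ 2 + (δ t : ℂ) * (x:ℂ) + (κ t : ℂ))) *
          χ (β t * x + ε t) (γ t))) * Complex.I_sq
end

section
/- Let l₀ ∈ {−1, 1}, h₀ ∈ ℝ, s ≥ 0, and let a, b, c, d, f₁, f₂, g₁, g₂ : I → ℝ be continuous on an open interval I. Suppose μ : I → (0,∞) and α, β, γ, δ₁, δ₂, ε₁, ε₂, κ₁, κ₂ : I → ℝ are differentiable and satisfy on I: α' + b + 2cα + 4aα² = 0; β' + (c + 4aα)β = 0; γ' + l₀·aβ² = 0; δ_j' + (c + 4aα)δ_j = f_j + 2g_j·α and ε_j' = (g_j − 2aδ_j)β and κ_j' = g_j·δ_j − a·δ_j² for j = 1, 2; together with μ' = 2μ(2aα + d). Set h(t) = h₀·a(t)·β(t)²·μ(t)^{2s}. If χ : ℝ × ℝ × ℝ → ℂ, written χ(ξ,η,τ), is C² and satisfies i·∂χ/∂τ − l₀·(∂²χ/∂ξ² + ∂²χ/∂η²) = −l₀·h₀·|χ|^{2s}·χ everywhere,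 then ψ(x,y,t) = μ(t)^{−1} · exp(i(α(t)(x² + y²) + δ₁(t)x + δ₂(t)y + κ₁(t) + κ₂(t))) · χ(β(t)x + ε₁(t), β(t)y + ε₂(t), γ(t)) satisfies at every (x,y,t) ∈ ℝ² × I the two-dimensional equation i·∂ψ/∂t = −a(ψ_xx + ψ_yy) + b(x² + y²)ψ − i·c·(x·ψ_x + y·ψ_y) − 2i·d·ψ − (f₁·x + f₂·y)ψ + i·(g₁·ψ_x + g₂·ψ_y) + h(t)·|ψ|^{2s}·ψ. -/
open Complex

private lemma chain3A {F : ℝ × ℝ × ℝ → ℂ} (hF : Differentiable ℝ F)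
    {u v w : ℝ → ℝ} {u' v' w' t : ℝ}
    (hu : HasDerivAt u u' t) (hv : HasDerivAt v v' t) (hw : HasDerivAt w w' t) :
    HasDerivAt (fun s => F (u s, v s, w s))
      ((u' : ℂ) * fderiv ℝ F (u t, v t, w t) (1, 0, 0)
        + (v' : ℂ) * fderiv ℝ F (u t, v t, w t) (0, 1, 0)
        + (w' : ℂ) * fderiv ℝ F (u t, v t, w t) (0, 0, 1)) t := by
  have h := ((hF (u t, v t, w t)).hasFDerivAt).comp_hasDerivAt t (hu.prodMk (hv.prodMk hw))
  refine h.congr_deriv ?_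
  have hv3 : (u', v', w') = u' • ((1:ℝ), (0:ℝ), (0:ℝ)) + v' • ((0:ℝ), (1:ℝ), (0:ℝ))
      + w' • ((0:ℝ), (0:ℝ), (1:ℝ)) := by simp [Prod.ext_iff]
  rw [hv3, map_add, map_add, map_smul, map_smul, map_smul]
  simp [Complex.real_smul]

noncomputable def pd1 (χ : ℝ → ℝ → ℝ → ℂ) (q : ℝ × ℝ × ℝ) : ℂ :=
  fderiv ℝ (fun p : ℝ × ℝ × ℝ => χ p.1 p.2.1 p.2.2) q (1, 0, 0)
noncomputable def pd2 (χ : ℝ → ℝ → ℝ → ℂ) (q : ℝ × ℝ × ℝ) : ℂ :=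
  fderiv ℝ (fun p : ℝ × ℝ × ℝ => χ p.1 p.2.1 p.2.2) q (0, 1, 0)
noncomputable def pd3 (χ : ℝ → ℝ → ℝ → ℂ) (q : ℝ × ℝ × ℝ) : ℂ :=
  fderiv ℝ (fun p : ℝ × ℝ × ℝ => χ p.1 p.2.1 p.2.2) q (0, 0, 1)

private lemma comp3 {χ : ℝ → ℝ → ℝ → ℂ}
    (hF : Differentiable ℝ (fun p : ℝ × ℝ × ℝ => χ p.1 p.2.1 p.2.2))
    {u v w : ℝ → ℝ} {u' v' w' t : ℝ}
    (hu : HasDerivAt u u' t) (hv : HasDerivAt v v' t) (hw : HasDerivAt w w' t) :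
    HasDerivAt (fun s => χ (u s) (v s) (w s))
      ((u' : ℂ) * pd1 χ (u t, v t, w t) + (v' : ℂ) * pd2 χ (u t, v t, w t)
        + (w' : ℂ) * pd3 χ (u t, v t, w t)) t :=
  chain3A hF hu hv hw

private lemma deriv1 {G : ℝ × ℝ × ℝ → ℂ} (hG : Differentiable ℝ G) (ξ η τ : ℝ) :
    deriv (fun s => G (s, η, τ)) ξ = fderiv ℝ G (ξ, η, τ) (1, 0, 0) := by
  simpa using (chain3A hG (hasDerivAt_id' (x := ξ)) (hasDerivAt_const ξ η)
    (hasDerivAt_const ξ τ)).deriv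

private lemma deriv2 {G : ℝ × ℝ × ℝ → ℂ} (hG : Differentiable ℝ G) (ξ η τ : ℝ) :
    deriv (fun s => G (ξ, s, τ)) η = fderiv ℝ G (ξ, η, τ) (0, 1, 0) := by
  simpa using (chain3A hG (hasDerivAt_const η ξ) (hasDerivAt_id' (x := η))
    (hasDerivAt_const η τ)).deriv

private lemma deriv3 {G : ℝ × ℝ × ℝ → ℂ} (hG : Differentiable ℝ G) (ξ η τ : ℝ) :
    deriv (fun s => G (ξ, η, s)) τ = fderiv ℝ G (ξ, η, τ) (0, 0, 1) := by
  simpa using (chain3A hG (hasDerivAt_const τ ξ) (hasDerivAt_const τ η)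
    (hasDerivAt_id' (x := τ))).deriv

private lemma pd1_diff {χ : ℝ → ℝ → ℝ → ℂ}
    (h2 : ContDiff ℝ 2 (fun p : ℝ × ℝ × ℝ => χ p.1 p.2.1 p.2.2)) :
    Differentiable ℝ (pd1 χ) :=
  ((h2.fderiv_right (m := 1) (by norm_num)).clm_apply contDiff_const).differentiable (by norm_num)

private lemma pd2_diff {χ : ℝ → ℝ → ℝ → ℂ}
    (h2 : ContDiff ℝ 2 (fun p : ℝ × ℝ × ℝ => χ p.1 p.2.1 p.2.2)) :
    Differentiable ℝ (pd2 χ) :=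
  ((h2.fderiv_right (m := 1) (by norm_num)).clm_apply contDiff_const).differentiable (by norm_num)

private lemma HasDerivAt.congr_d {E : Type*} [NormedAddCommGroup E] [NormedSpace ℝ E]
    {f : ℝ → E} {d₁ d₂ : E} {x : ℝ}
    (h : HasDerivAt f d₁ x) (he : d₁ = d₂) : HasDerivAt f d₂ x := he ▸ h

/-- The two-dimensional generalized lens transformation (appendix Lemma, used in
Theorem 1(iii)): the ansatz `ψ = μ^{-1} e^{i(α(x²+y²) + δ₁x + δ₂y + κ₁ + κ₂)}
χ(βx + ε₁, βy + ε₂, γ)` transforms the 2D variable-coefficient NLS into the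
autonomous equation `i χ_τ - l₀(χ_ξξ + χ_ηη) = -l₀ h₀ |χ|^{2s} χ`. -/
theorem stmt13
    (l₀ : ℝ) (hl₀ : l₀ = 1 ∨ l₀ = -1)
    (h₀ s : ℝ) (hs : 0 ≤ s)
    (I : Set ℝ) (hIopen : IsOpen I) (hIconn : I.OrdConnected)
    (a b c d f₁ f₂ g₁ g₂ : ℝ → ℝ)
    (ha : ContinuousOn a I) (hb : ContinuousOn b I) (hc : ContinuousOn c I)
    (hd : ContinuousOn d I) (hf₁ : ContinuousOn f₁ I) (hf₂ : ContinuousOn f₂ I)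
    (hg₁ : ContinuousOn g₁ I) (hg₂ : ContinuousOn g₂ I)
    (μ α β γ δ₁ δ₂ ε₁ ε₂ κ₁ κ₂ : ℝ → ℝ)
    (hμpos : ∀ t ∈ I, 0 < μ t)
    (hα : ∀ t ∈ I, HasDerivAt α (-(b t + 2 * c t * α t + 4 * a t * (α t) ^ 2)) t)
    (hβ : ∀ t ∈ I, HasDerivAt β (-((c t + 4 * a t * α t) * β t)) t)
    (hγ : ∀ t ∈ I, HasDerivAt γ (-(l₀ * a t * (β t) ^ 2)) t)
    (hδ₁ : ∀ t ∈ I, HasDerivAt δ₁ (f₁ t + 2 * g₁ t * α t - (c t + 4 * a t * α t) * δ₁ t) t)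
    (hδ₂ : ∀ t ∈ I, HasDerivAt δ₂ (f₂ t + 2 * g₂ t * α t - (c t + 4 * a t * α t) * δ₂ t) t)
    (hε₁ : ∀ t ∈ I, HasDerivAt ε₁ ((g₁ t - 2 * a t * δ₁ t) * β t) t)
    (hε₂ : ∀ t ∈ I, HasDerivAt ε₂ ((g₂ t - 2 * a t * δ₂ t) * β t) t)
    (hκ₁ : ∀ t ∈ I, HasDerivAt κ₁ (g₁ t * δ₁ t - a t * (δ₁ t) ^ 2) t)
    (hκ₂ : ∀ t ∈ I, HasDerivAt κ₂ (g₂ t * δ₂ t - a t * (δ₂ t) ^ 2) t)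
    (hμ : ∀ t ∈ I, HasDerivAt μ (2 * μ t * (2 * a t * α t + d t)) t)
    (h : ℝ → ℝ) (hh : ∀ t, h t = h₀ * a t * (β t) ^ 2 * (μ t) ^ (2 * s))
    (χ : ℝ → ℝ → ℝ → ℂ)
    (hχsmooth : ContDiff ℝ 2 (fun p : ℝ × ℝ × ℝ => χ p.1 p.2.1 p.2.2))
    (hχ : ∀ ξ η τ : ℝ,
      Complex.I * deriv (fun τ' => χ ξ η τ') τ
        - (l₀ : ℂ) * (deriv (fun ξ' => deriv (fun ξ'' => χ ξ'' η τ) ξ') ξ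
            + deriv (fun η' => deriv (fun η'' => χ ξ η'' τ) η') η)
        = -(l₀ : ℂ) * (h₀ : ℂ) * ((‖χ ξ η τ‖ ^ (2 * s) : ℝ) : ℂ) * χ ξ η τ)
    (ψ : ℝ → ℝ → ℝ → ℂ)
    (hψ : ∀ x y t, ψ x y t = ((μ t)⁻¹ : ℝ) *
      Complex.exp (Complex.I *
        ((α t * (x ^ 2 + y ^ 2) + δ₁ t * x + δ₂ t * y + κ₁ t + κ₂ t : ℝ) : ℂ)) *
      χ (β t * x + ε₁ t) (β t * y + ε₂ t) (γ t)) :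
    ∀ x y : ℝ, ∀ t ∈ I,
      Complex.I * deriv (fun τ => ψ x y τ) t =
        -(a t : ℂ) * (deriv (fun x' => deriv (fun x'' => ψ x'' y t) x') x
            + deriv (fun y' => deriv (fun y'' => ψ x y'' t) y') y)
        + (b t : ℂ) * ((x : ℂ) ^ 2 + (y : ℂ) ^ 2) * ψ x y t
        - Complex.I * (c t : ℂ) * ((x : ℂ) * deriv (fun x' => ψ x' y t) x
            + (y : ℂ) * deriv (fun y' => ψ x y' t) y)
        - 2 * Complex.I * (d t : ℂ) * ψ x y t
        - ((f₁ t : ℂ) * (x : ℂ) + (f₂ t : ℂ) * (y : ℂ)) * ψ x y t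
        + Complex.I * ((g₁ t : ℂ) * deriv (fun x' => ψ x' y t) x
            + (g₂ t : ℂ) * deriv (fun y' => ψ x y' t) y)
        + (h t : ℂ) * ((‖ψ x y t‖ ^ (2 * s) : ℝ) : ℂ) * ψ x y t := by
  intro x y t ht
  have hFd : Differentiable ℝ (fun p : ℝ × ℝ × ℝ => χ p.1 p.2.1 p.2.2) :=
    hχsmooth.differentiable (by norm_num)
  have hμn : μ t ≠ 0 := (hμpos t ht).ne'
  have hμC : (μ t : ℂ) ≠ 0 := Complex.ofReal_ne_zero.mpr hμn
  -- first derivative in x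
  have hdx : ∀ x' : ℝ, HasDerivAt (fun x'' => ψ x'' y t)
      ((((μ t)⁻¹ : ℝ) : ℂ) * Complex.exp (Complex.I *
          ((α t * (x' ^ 2 + y ^ 2) + δ₁ t * x' + δ₂ t * y + κ₁ t + κ₂ t : ℝ) : ℂ)) *
        (Complex.I * ((2 * α t * x' + δ₁ t : ℝ) : ℂ) *
            χ (β t * x' + ε₁ t) (β t * y + ε₂ t) (γ t)
          + ((β t : ℝ) : ℂ) * pd1 χ (β t * x' + ε₁ t, β t * y + ε₂ t, γ t))) x' := by
    intro x'
    have h1 : HasDerivAt (fun x'' : ℝ => x'' ^ 2 + y ^ 2) (2 * x') x' := by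
      simpa using (hasDerivAt_pow 2 x').add_const (y ^ 2)
    have hQ : HasDerivAt (fun x'' : ℝ =>
        α t * (x'' ^ 2 + y ^ 2) + δ₁ t * x'' + δ₂ t * y + κ₁ t + κ₂ t)
        (2 * α t * x' + δ₁ t) x' :=
      (((((h1.const_mul (α t)).add ((hasDerivAt_id' (x := x')).const_mul (δ₁ t))).add_const
        (δ₂ t * y)).add_const (κ₁ t)).add_const (κ₂ t)).congr_d (by ring)
    have hE := ((hQ.ofReal_comp).const_mul Complex.I).cexp
    have hu : HasDerivAt (fun x'' : ℝ => β t * x'' + ε₁ t) (β t) x' := by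
      simpa using ((hasDerivAt_id' (x := x')).const_mul (β t)).add_const (ε₁ t)
    have hχc := comp3 hFd hu (hasDerivAt_const x' (β t * y + ε₂ t)) (hasDerivAt_const x' (γ t))
    have H := (hE.const_mul (((μ t)⁻¹ : ℝ) : ℂ)).mul hχc
    simp only [hψ]
    apply H.congr_d
    push_cast
    ring
  -- first derivative in y
  have hdy : ∀ y' : ℝ, HasDerivAt (fun y'' => ψ x y'' t)
      ((((μ t)⁻¹ : ℝ) : ℂ) * Complex.exp (Complex.I *
          ((α t * (x ^ 2 + y' ^ 2) + δ₁ t * x + δ₂ t * y' + κ₁ t + κ₂ t : ℝ) : ℂ)) *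
        (Complex.I * ((2 * α t * y' + δ₂ t : ℝ) : ℂ) *
            χ (β t * x + ε₁ t) (β t * y' + ε₂ t) (γ t)
          + ((β t : ℝ) : ℂ) * pd2 χ (β t * x + ε₁ t, β t * y' + ε₂ t, γ t))) y' := by
    intro y'
    have h1 : HasDerivAt (fun y'' : ℝ => x ^ 2 + y'' ^ 2) (2 * y') y' := by
      simpa using (hasDerivAt_pow 2 y').const_add (x ^ 2)
    have hQ : HasDerivAt (fun y'' : ℝ =>
        α t * (x ^ 2 + y'' ^ 2) + δ₁ t * x + δ₂ t * y'' + κ₁ t + κ₂ t)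
        (2 * α t * y' + δ₂ t) y' :=
      (((((h1.const_mul (α t)).add_const (δ₁ t * x)).add
        ((hasDerivAt_id' (x := y')).const_mul (δ₂ t))).add_const (κ₁ t)).add_const
        (κ₂ t)).congr_d (by ring)
    have hE := ((hQ.ofReal_comp).const_mul Complex.I).cexp
    have hv : HasDerivAt (fun y'' : ℝ => β t * y'' + ε₂ t) (β t) y' := by
      simpa using ((hasDerivAt_id' (x := y')).const_mul (β t)).add_const (ε₂ t)
    have hχc := comp3 hFd (hasDerivAt_const y' (β t * x + ε₁ t)) hv (hasDerivAt_const y' (γ t))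
    have H := (hE.const_mul (((μ t)⁻¹ : ℝ) : ℂ)).mul hχc
    simp only [hψ]
    apply H.congr_d
    push_cast
    ring
  have hfx : (deriv fun x'' => ψ x'' y t) = (fun x' =>
      (((μ t)⁻¹ : ℝ) : ℂ) * Complex.exp (Complex.I *
          ((α t * (x' ^ 2 + y ^ 2) + δ₁ t * x' + δ₂ t * y + κ₁ t + κ₂ t : ℝ) : ℂ)) *
        (Complex.I * ((2 * α t * x' + δ₁ t : ℝ) : ℂ) *
            χ (β t * x' + ε₁ t) (β t * y + ε₂ t) (γ t)
          + ((β t : ℝ) : ℂ) * pd1 χ (β t * x' + ε₁ t, β t * y + ε₂ t, γ t))) :=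
    funext fun x' => (hdx x').deriv
  have hfy : (deriv fun y'' => ψ x y'' t) = (fun y' =>
      (((μ t)⁻¹ : ℝ) : ℂ) * Complex.exp (Complex.I *
          ((α t * (x ^ 2 + y' ^ 2) + δ₁ t * x + δ₂ t * y' + κ₁ t + κ₂ t : ℝ) : ℂ)) *
        (Complex.I * ((2 * α t * y' + δ₂ t : ℝ) : ℂ) *
            χ (β t * x + ε₁ t) (β t * y' + ε₂ t) (γ t)
          + ((β t : ℝ) : ℂ) * pd2 χ (β t * x + ε₁ t, β t * y' + ε₂ t, γ t))) :=
    funext fun y' => (hdy y').deriv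
  -- second derivative in x
  have hXX : HasDerivAt (fun x' =>
      (((μ t)⁻¹ : ℝ) : ℂ) * Complex.exp (Complex.I *
          ((α t * (x' ^ 2 + y ^ 2) + δ₁ t * x' + δ₂ t * y + κ₁ t + κ₂ t : ℝ) : ℂ)) *
        (Complex.I * ((2 * α t * x' + δ₁ t : ℝ) : ℂ) *
            χ (β t * x' + ε₁ t) (β t * y + ε₂ t) (γ t)
          + ((β t : ℝ) : ℂ) * pd1 χ (β t * x' + ε₁ t, β t * y + ε₂ t, γ t)))
      ((((μ t)⁻¹ : ℝ) : ℂ) * Complex.exp (Complex.I *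
          ((α t * (x ^ 2 + y ^ 2) + δ₁ t * x + δ₂ t * y + κ₁ t + κ₂ t : ℝ) : ℂ)) *
        ((Complex.I * ((2 * α t * x + δ₁ t : ℝ) : ℂ)) ^ 2 *
            χ (β t * x + ε₁ t) (β t * y + ε₂ t) (γ t)
          + Complex.I * ((2 * α t : ℝ) : ℂ) * χ (β t * x + ε₁ t) (β t * y + ε₂ t) (γ t)
          + 2 * (Complex.I * ((2 * α t * x + δ₁ t : ℝ) : ℂ)) * ((β t : ℝ) : ℂ) *
              pd1 χ (β t * x + ε₁ t, β t * y + ε₂ t, γ t)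
          + ((β t : ℝ) : ℂ) ^ 2 *
              fderiv ℝ (pd1 χ) (β t * x + ε₁ t, β t * y + ε₂ t, γ t) (1, 0, 0))) x := by
    have h1 : HasDerivAt (fun x'' : ℝ => x'' ^ 2 + y ^ 2) (2 * x) x := by
      simpa using (hasDerivAt_pow 2 x).add_const (y ^ 2)
    have hQ : HasDerivAt (fun x'' : ℝ =>
        α t * (x'' ^ 2 + y ^ 2) + δ₁ t * x'' + δ₂ t * y + κ₁ t + κ₂ t)
        (2 * α t * x + δ₁ t) x :=
      (((((h1.const_mul (α t)).add ((hasDerivAt_id' (x := x)).const_mul (δ₁ t))).add_const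
        (δ₂ t * y)).add_const (κ₁ t)).add_const (κ₂ t)).congr_d (by ring)
    have hE := ((hQ.ofReal_comp).const_mul Complex.I).cexp
    have hu : HasDerivAt (fun x'' : ℝ => β t * x'' + ε₁ t) (β t) x := by
      simpa using ((hasDerivAt_id' (x := x)).const_mul (β t)).add_const (ε₁ t)
    have hχc := comp3 hFd hu (hasDerivAt_const x (β t * y + ε₂ t)) (hasDerivAt_const x (γ t))
    have hIX : HasDerivAt (fun x'' : ℝ => Complex.I * ((2 * α t * x'' + δ₁ t : ℝ) : ℂ))
        (Complex.I * ((2 * α t : ℝ) : ℂ)) x := by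
      have h2 : HasDerivAt (fun x'' : ℝ => 2 * α t * x'' + δ₁ t) (2 * α t) x := by
        simpa using ((hasDerivAt_id' (x := x)).const_mul (2 * α t)).add_const (δ₁ t)
      exact (h2.ofReal_comp).const_mul Complex.I
    have hP1c := (chain3A (pd1_diff hχsmooth) hu (hasDerivAt_const x (β t * y + ε₂ t))
      (hasDerivAt_const x (γ t))).const_mul (((β t : ℝ) : ℂ))
    have H := (hE.const_mul (((μ t)⁻¹ : ℝ) : ℂ)).mul ((hIX.mul hχc).add hP1c)
    apply H.congr_d
    push_cast [Pi.mul_apply, Pi.add_apply]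
    ring
  -- second derivative in y
  have hYY : HasDerivAt (fun y' =>
      (((μ t)⁻¹ : ℝ) : ℂ) * Complex.exp (Complex.I *
          ((α t * (x ^ 2 + y' ^ 2) + δ₁ t * x + δ₂ t * y' + κ₁ t + κ₂ t : ℝ) : ℂ)) *
        (Complex.I * ((2 * α t * y' + δ₂ t : ℝ) : ℂ) *
            χ (β t * x + ε₁ t) (β t * y' + ε₂ t) (γ t)
          + ((β t : ℝ) : ℂ) * pd2 χ (β t * x + ε₁ t, β t * y' + ε₂ t, γ t)))
      ((((μ t)⁻¹ : ℝ) : ℂ) * Complex.exp (Complex.I *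
          ((α t * (x ^ 2 + y ^ 2) + δ₁ t * x + δ₂ t * y + κ₁ t + κ₂ t : ℝ) : ℂ)) *
        ((Complex.I * ((2 * α t * y + δ₂ t : ℝ) : ℂ)) ^ 2 *
            χ (β t * x + ε₁ t) (β t * y + ε₂ t) (γ t)
          + Complex.I * ((2 * α t : ℝ) : ℂ) * χ (β t * x + ε₁ t) (β t * y + ε₂ t) (γ t)
          + 2 * (Complex.I * ((2 * α t * y + δ₂ t : ℝ) : ℂ)) * ((β t : ℝ) : ℂ) *
              pd2 χ (β t * x + ε₁ t, β t * y + ε₂ t, γ t)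
          + ((β t : ℝ) : ℂ) ^ 2 *
              fderiv ℝ (pd2 χ) (β t * x + ε₁ t, β t * y + ε₂ t, γ t) (0, 1, 0))) y := by
    have h1 : HasDerivAt (fun y'' : ℝ => x ^ 2 + y'' ^ 2) (2 * y) y := by
      simpa using (hasDerivAt_pow 2 y).const_add (x ^ 2)
    have hQ : HasDerivAt (fun y'' : ℝ =>
        α t * (x ^ 2 + y'' ^ 2) + δ₁ t * x + δ₂ t * y'' + κ₁ t + κ₂ t)
        (2 * α t * y + δ₂ t) y :=
      (((((h1.const_mul (α t)).add_const (δ₁ t * x)).add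
        ((hasDerivAt_id' (x := y)).const_mul (δ₂ t))).add_const (κ₁ t)).add_const
        (κ₂ t)).congr_d (by ring)
    have hE := ((hQ.ofReal_comp).const_mul Complex.I).cexp
    have hv : HasDerivAt (fun y'' : ℝ => β t * y'' + ε₂ t) (β t) y := by
      simpa using ((hasDerivAt_id' (x := y)).const_mul (β t)).add_const (ε₂ t)
    have hχc := comp3 hFd (hasDerivAt_const y (β t * x + ε₁ t)) hv (hasDerivAt_const y (γ t))
    have hIY : HasDerivAt (fun y'' : ℝ => Complex.I * ((2 * α t * y'' + δ₂ t : ℝ) : ℂ))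
        (Complex.I * ((2 * α t : ℝ) : ℂ)) y := by
      have h2 : HasDerivAt (fun y'' : ℝ => 2 * α t * y'' + δ₂ t) (2 * α t) y := by
        simpa using ((hasDerivAt_id' (x := y)).const_mul (2 * α t)).add_const (δ₂ t)
      exact (h2.ofReal_comp).const_mul Complex.I
    have hP2c := (chain3A (pd2_diff hχsmooth) (hasDerivAt_const y (β t * x + ε₁ t)) hv
      (hasDerivAt_const y (γ t))).const_mul (((β t : ℝ) : ℂ))
    have H := (hE.const_mul (((μ t)⁻¹ : ℝ) : ℂ)).mul ((hIY.mul hχc).add hP2c)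
    apply H.congr_d
    push_cast [Pi.mul_apply, Pi.add_apply]
    ring
  -- time derivative
  have hT : HasDerivAt (fun τ' => ψ x y τ')
      ((((μ t)⁻¹ : ℝ) : ℂ) * Complex.exp (Complex.I *
          ((α t * (x ^ 2 + y ^ 2) + δ₁ t * x + δ₂ t * y + κ₁ t + κ₂ t : ℝ) : ℂ)) *
        (((-(2 * (2 * a t * α t + d t)) : ℝ) : ℂ) *
            χ (β t * x + ε₁ t) (β t * y + ε₂ t) (γ t)
          + Complex.I * ((-(b t + 2 * c t * α t + 4 * a t * (α t) ^ 2) * (x ^ 2 + y ^ 2)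
              + (f₁ t + 2 * g₁ t * α t - (c t + 4 * a t * α t) * δ₁ t) * x
              + (f₂ t + 2 * g₂ t * α t - (c t + 4 * a t * α t) * δ₂ t) * y
              + (g₁ t * δ₁ t - a t * (δ₁ t) ^ 2)
              + (g₂ t * δ₂ t - a t * (δ₂ t) ^ 2) : ℝ) : ℂ) *
            χ (β t * x + ε₁ t) (β t * y + ε₂ t) (γ t)
          + ((-((c t + 4 * a t * α t) * β t) * x + (g₁ t - 2 * a t * δ₁ t) * β t : ℝ) : ℂ) *
              pd1 χ (β t * x + ε₁ t, β t * y + ε₂ t, γ t)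
          + ((-((c t + 4 * a t * α t) * β t) * y + (g₂ t - 2 * a t * δ₂ t) * β t : ℝ) : ℂ) *
              pd2 χ (β t * x + ε₁ t, β t * y + ε₂ t, γ t)
          + ((-(l₀ * a t * (β t) ^ 2) : ℝ) : ℂ) *
              pd3 χ (β t * x + ε₁ t, β t * y + ε₂ t, γ t))) t := by
    have hQt := ((((hα t ht).mul_const (x ^ 2 + y ^ 2)).add ((hδ₁ t ht).mul_const x)).add
      ((hδ₂ t ht).mul_const y)).add (hκ₁ t ht) |>.add (hκ₂ t ht)
    have hEt := ((hQt.ofReal_comp).const_mul Complex.I).cexp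
    have hut := ((hβ t ht).mul_const x).add (hε₁ t ht)
    have hvt := ((hβ t ht).mul_const y).add (hε₂ t ht)
    have hmc := ((hμ t ht).inv hμn).ofReal_comp
    have hχt := comp3 hFd hut hvt (hγ t ht)
    have H := (hmc.mul hEt).mul hχt
    simp only [hψ]
    apply H.congr_d
    push_cast [Pi.mul_apply, Pi.add_apply, Pi.inv_apply]
    field_simp
    ring
  -- the nonlinear coefficient
  have hμabs : ‖ψ x y t‖
      = (μ t)⁻¹ * ‖χ (β t * x + ε₁ t) (β t * y + ε₂ t) (γ t)‖ := by
    rw [hψ, norm_mul, norm_mul, Complex.norm_of_nonneg (inv_nonneg.mpr (hμpos t ht).le),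
      Complex.norm_exp]
    have hre : ∀ r : ℝ, (Complex.I * (r : ℂ)).re = 0 := fun r => by simp
    rw [hre, Real.exp_zero, mul_one]
  have habs : h t * ‖ψ x y t‖ ^ (2 * s)
      = h₀ * a t * (β t) ^ 2 *
        ‖χ (β t * x + ε₁ t) (β t * y + ε₂ t) (γ t)‖ ^ (2 * s) := by
    rw [hμabs, hh, Real.mul_rpow (inv_nonneg.mpr (hμpos t ht).le) (norm_nonneg _),
      Real.inv_rpow (hμpos t ht).le]
    have hne : (μ t) ^ (2 * s) ≠ 0 := (Real.rpow_pos_of_pos (hμpos t ht) _).ne'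
    field_simp
  have hhc : ((h t : ℝ) : ℂ) * ((‖ψ x y t‖ ^ (2 * s) : ℝ) : ℂ)
      = ((h₀ * a t * (β t) ^ 2 : ℝ) : ℂ) *
        ((‖χ (β t * x + ε₁ t) (β t * y + ε₂ t) (γ t)‖ ^ (2 * s) : ℝ) : ℂ) := by
    rw [← Complex.ofReal_mul, habs, Complex.ofReal_mul]
  -- the χ equation at the transformed point
  have h0 := hχ (β t * x + ε₁ t) (β t * y + ε₂ t) (γ t)
  have c3 : deriv (fun τ' => χ (β t * x + ε₁ t) (β t * y + ε₂ t) τ') (γ t)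
      = pd3 χ (β t * x + ε₁ t, β t * y + ε₂ t, γ t) := deriv3 hFd _ _ _
  have hin1 : (fun ξ' => deriv (fun ξ'' => χ ξ'' (β t * y + ε₂ t) (γ t)) ξ')
      = fun ξ' => pd1 χ (ξ', β t * y + ε₂ t, γ t) :=
    funext fun ξ' => deriv1 hFd ξ' _ _
  have hin2 : (fun η' => deriv (fun η'' => χ (β t * x + ε₁ t) η'' (γ t)) η')
      = fun η' => pd2 χ (β t * x + ε₁ t, η', γ t) :=
    funext fun η' => deriv2 hFd _ η' _
  rw [c3, hin1, hin2, deriv1 (pd1_diff hχsmooth) (β t * x + ε₁ t) (β t * y + ε₂ t) (γ t),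
    deriv2 (pd2_diff hχsmooth) (β t * x + ε₁ t) (β t * y + ε₂ t) (γ t)] at h0
  -- assemble
  rw [hT.deriv, hfx, hfy]
  beta_reduce
  rw [hXX.deriv, hYY.deriv, hhc, hψ x y t]
  set CC := χ (β t * x + ε₁ t) (β t * y + ε₂ t) (γ t) with hCC
  set EE := Complex.exp (Complex.I *
    ((α t * (x ^ 2 + y ^ 2) + δ₁ t * x + δ₂ t * y + κ₁ t + κ₂ t : ℝ) : ℂ)) with hEE
  set P1a := pd1 χ (β t * x + ε₁ t, β t * y + ε₂ t, γ t) with hP1a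
  set P2a := pd2 χ (β t * x + ε₁ t, β t * y + ε₂ t, γ t) with hP2a
  set P3a := pd3 χ (β t * x + ε₁ t, β t * y + ε₂ t, γ t) with hP3a
  set Q11 := fderiv ℝ (pd1 χ) (β t * x + ε₁ t, β t * y + ε₂ t, γ t) (1, 0, 0) with hQ11
  set Q22 := fderiv ℝ (pd2 χ) (β t * x + ε₁ t, β t * y + ε₂ t, γ t) (0, 1, 0) with hQ22
  set KK := ((‖CC‖ ^ (2 * s) : ℝ) : ℂ) with hKK
  rcases hl₀ with rfl | rfl
  · push_cast at h0 ⊢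
    linear_combination (norm := (ring_nf; simp only [Complex.I_sq]; ring1))
      ((((μ t : ℂ))⁻¹ * EE) * (-((a t : ℂ) * (β t : ℂ) ^ 2))) * h0
  · push_cast at h0 ⊢
    linear_combination (norm := (ring_nf; simp only [Complex.I_sq]; ring1))
      ((((μ t : ℂ))⁻¹ * EE) * ((a t : ℂ) * (β t : ℂ) ^ 2)) * h0
end

section
/- For every A ∈ ℝ, the function u : ℝ × ℝ → ℂ defined by u(t,x) = A·exp(2iA²t)·(3 + 16iA²t − 16A⁴t² − 4A²x²)/(1 + 16A⁴t² + 4A²x²) satisfies at every point the equation i·∂u/∂t + ∂²u/∂x² + 2·|u|²·u = 0. -/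
set_option maxHeartbeats 2000000

open Complex

/-- The Peregrine soliton solves the standard focusing cubic NLS
`i u_t + u_xx + 2|u|²u = 0`. -/
theorem stmt14
    (A : ℝ)
    (u : ℝ → ℝ → ℂ)
    (hu : ∀ t x : ℝ, u t x = (A : ℂ) * Complex.exp (2 * Complex.I * (A : ℂ) ^ 2 * (t : ℂ)) *
      ((3 + 16 * Complex.I * (A : ℂ) ^ 2 * (t : ℂ) - 16 * (A : ℂ) ^ 4 * (t : ℂ) ^ 2
          - 4 * (A : ℂ) ^ 2 * (x : ℂ) ^ 2) /
        (1 + 16 * (A : ℂ) ^ 4 * (t : ℂ) ^ 2 + 4 * (A : ℂ) ^ 2 * (x : ℂ) ^ 2))) :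
    ∀ t x : ℝ,
      Complex.I * deriv (fun t' => u t' x) t
        + deriv (fun x' => deriv (fun x'' => u t x'') x') x
        + 2 * ((‖u t x‖ ^ 2 : ℝ) : ℂ) * u t x = 0 := by
  intro t x
  -- nonvanishing denominator
  have hgen : ∀ s y : ℝ, (1 : ℂ) + 16 * (A:ℂ)^4 * (s:ℂ)^2 + 4 * (A:ℂ)^2 * (y:ℂ)^2 ≠ 0 := by
    intro s y
    have h : (1 : ℂ) + 16 * (A:ℂ)^4 * (s:ℂ)^2 + 4 * (A:ℂ)^2 * (y:ℂ)^2
        = ((1 + 16 * A^4 * s^2 + 4 * A^2 * y^2 : ℝ) : ℂ) := by push_cast; ring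
    rw [h]
    exact_mod_cast (by positivity : (1 + 16 * A^4 * s^2 + 4 * A^2 * y^2 : ℝ) ≠ 0)
  -- time derivative
  have hE : HasDerivAt (fun z : ℂ => Complex.exp (2 * Complex.I * (A:ℂ)^2 * z))
      (Complex.exp (2 * Complex.I * (A:ℂ)^2 * (t:ℂ)) * (2 * Complex.I * (A:ℂ)^2)) (t:ℂ) := by
    simpa using ((hasDerivAt_id' ((t:ℂ))).const_mul (2 * Complex.I * (A:ℂ)^2)).cexp
  have hNt : HasDerivAt (fun z : ℂ => 3 + 16 * Complex.I * (A:ℂ)^2 * z - 16 * (A:ℂ)^4 * z^2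
      - 4 * (A:ℂ)^2 * (x:ℂ)^2)
      (16 * Complex.I * (A:ℂ)^2 - 16 * (A:ℂ)^4 * (2 * (t:ℂ))) (t:ℂ) := by
    simpa using ((((hasDerivAt_id' ((t:ℂ))).const_mul (16 * Complex.I * (A:ℂ)^2)).const_add 3).sub
      ((hasDerivAt_pow 2 ((t:ℂ))).const_mul (16 * (A:ℂ)^4))).sub_const (4 * (A:ℂ)^2 * (x:ℂ)^2)
  have hDt : HasDerivAt (fun z : ℂ => 1 + 16 * (A:ℂ)^4 * z^2 + 4 * (A:ℂ)^2 * (x:ℂ)^2)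
      (16 * (A:ℂ)^4 * (2 * (t:ℂ))) (t:ℂ) := by
    simpa using (((hasDerivAt_pow 2 ((t:ℂ))).const_mul (16 * (A:ℂ)^4)).const_add 1).add_const
      (4 * (A:ℂ)^2 * (x:ℂ)^2)
  have hUt := ((hE.const_mul ((A:ℂ))).mul (hNt.div hDt (hgen t x))).comp_ofReal
  have hut : deriv (fun t' : ℝ => u t' x) t
      = (A:ℂ) * (Complex.exp (2 * Complex.I * (A:ℂ)^2 * (t:ℂ)) * (2 * Complex.I * (A:ℂ)^2)) *
          ((3 + 16 * Complex.I * (A:ℂ)^2 * (t:ℂ) - 16 * (A:ℂ)^4 * (t:ℂ)^2 - 4 * (A:ℂ)^2 * (x:ℂ)^2) /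
            (1 + 16 * (A:ℂ)^4 * (t:ℂ)^2 + 4 * (A:ℂ)^2 * (x:ℂ)^2))
        + (A:ℂ) * Complex.exp (2 * Complex.I * (A:ℂ)^2 * (t:ℂ)) *
          (((16 * Complex.I * (A:ℂ)^2 - 16 * (A:ℂ)^4 * (2 * (t:ℂ))) *
              (1 + 16 * (A:ℂ)^4 * (t:ℂ)^2 + 4 * (A:ℂ)^2 * (x:ℂ)^2)
            - (3 + 16 * Complex.I * (A:ℂ)^2 * (t:ℂ) - 16 * (A:ℂ)^4 * (t:ℂ)^2 - 4 * (A:ℂ)^2 * (x:ℂ)^2) *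
              (16 * (A:ℂ)^4 * (2 * (t:ℂ)))) /
            (1 + 16 * (A:ℂ)^4 * (t:ℂ)^2 + 4 * (A:ℂ)^2 * (x:ℂ)^2)^2) := by
    have hfun : (fun t' : ℝ => u t' x) = fun t' : ℝ =>
        (A:ℂ) * Complex.exp (2 * Complex.I * (A:ℂ)^2 * (t':ℂ)) *
          ((3 + 16 * Complex.I * (A:ℂ)^2 * (t':ℂ) - 16 * (A:ℂ)^4 * (t':ℂ)^2 - 4 * (A:ℂ)^2 * (x:ℂ)^2) /
            (1 + 16 * (A:ℂ)^4 * (t':ℂ)^2 + 4 * (A:ℂ)^2 * (x:ℂ)^2)) := funext fun s => hu s x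
    rw [hfun]
    exact hUt.deriv
  -- first space derivative, at every point
  have hx1 : (fun x' : ℝ => deriv (fun x'' : ℝ => u t x'') x') = fun x' : ℝ =>
      (A:ℂ) * Complex.exp (2 * Complex.I * (A:ℂ)^2 * (t:ℂ)) *
        ((-(8 * (A:ℂ)^2) * ((3 + 16 * Complex.I * (A:ℂ)^2 * (t:ℂ) - 16 * (A:ℂ)^4 * (t:ℂ)^2)
            + (1 + 16 * (A:ℂ)^4 * (t:ℂ)^2)) * (x':ℂ)) /
          (1 + 16 * (A:ℂ)^4 * (t:ℂ)^2 + 4 * (A:ℂ)^2 * (x':ℂ)^2)^2) := by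
    funext y
    have hfun : (fun x'' : ℝ => u t x'') = fun x'' : ℝ =>
        (A:ℂ) * Complex.exp (2 * Complex.I * (A:ℂ)^2 * (t:ℂ)) *
          ((3 + 16 * Complex.I * (A:ℂ)^2 * (t:ℂ) - 16 * (A:ℂ)^4 * (t:ℂ)^2 - 4 * (A:ℂ)^2 * (x'':ℂ)^2) /
            (1 + 16 * (A:ℂ)^4 * (t:ℂ)^2 + 4 * (A:ℂ)^2 * (x'':ℂ)^2)) := funext fun s => hu t s
    rw [hfun]
    have hN : HasDerivAt (fun z : ℂ => 3 + 16 * Complex.I * (A:ℂ)^2 * (t:ℂ) - 16 * (A:ℂ)^4 * (t:ℂ)^2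
        - 4 * (A:ℂ)^2 * z^2) (-(4 * (A:ℂ)^2 * (2 * (y:ℂ)))) (y:ℂ) := by
      simpa using HasDerivAt.const_sub
        (3 + 16 * Complex.I * (A:ℂ)^2 * (t:ℂ) - 16 * (A:ℂ)^4 * (t:ℂ)^2)
        ((hasDerivAt_pow 2 ((y:ℂ))).const_mul (4 * (A:ℂ)^2))
    have hD : HasDerivAt (fun z : ℂ => 1 + 16 * (A:ℂ)^4 * (t:ℂ)^2 + 4 * (A:ℂ)^2 * z^2)
        (4 * (A:ℂ)^2 * (2 * (y:ℂ))) (y:ℂ) := by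
      simpa using ((hasDerivAt_pow 2 ((y:ℂ))).const_mul (4 * (A:ℂ)^2)).const_add
        (1 + 16 * (A:ℂ)^4 * (t:ℂ)^2)
    have hq := ((hN.fun_div hD (hgen t y)).const_mul
      ((A:ℂ) * Complex.exp (2 * Complex.I * (A:ℂ)^2 * (t:ℂ)))).comp_ofReal
    rw [hq.deriv]
    ring
  -- second space derivative
  have hnum : HasDerivAt (fun z : ℂ => -(8 * (A:ℂ)^2) * ((3 + 16 * Complex.I * (A:ℂ)^2 * (t:ℂ)
      - 16 * (A:ℂ)^4 * (t:ℂ)^2) + (1 + 16 * (A:ℂ)^4 * (t:ℂ)^2)) * z)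
      (-(8 * (A:ℂ)^2) * ((3 + 16 * Complex.I * (A:ℂ)^2 * (t:ℂ) - 16 * (A:ℂ)^4 * (t:ℂ)^2)
        + (1 + 16 * (A:ℂ)^4 * (t:ℂ)^2)) * 1) (x:ℂ) :=
    (hasDerivAt_id' ((x:ℂ))).const_mul (-(8 * (A:ℂ)^2) *
      ((3 + 16 * Complex.I * (A:ℂ)^2 * (t:ℂ) - 16 * (A:ℂ)^4 * (t:ℂ)^2) + (1 + 16 * (A:ℂ)^4 * (t:ℂ)^2)))
  have hden : HasDerivAt (fun z : ℂ => (1 + 16 * (A:ℂ)^4 * (t:ℂ)^2 + 4 * (A:ℂ)^2 * z^2)^2)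
      (2 * (1 + 16 * (A:ℂ)^4 * (t:ℂ)^2 + 4 * (A:ℂ)^2 * (x:ℂ)^2) * (4 * (A:ℂ)^2 * (2 * (x:ℂ)))) (x:ℂ) := by
    have h1 : HasDerivAt (fun z : ℂ => 1 + 16 * (A:ℂ)^4 * (t:ℂ)^2 + 4 * (A:ℂ)^2 * z^2)
        (4 * (A:ℂ)^2 * (2 * (x:ℂ))) (x:ℂ) := by
      simpa using ((hasDerivAt_pow 2 ((x:ℂ))).const_mul (4 * (A:ℂ)^2)).const_add
        (1 + 16 * (A:ℂ)^4 * (t:ℂ)^2)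
    simpa [Pi.pow_def] using h1.pow 2
  have hUxx := ((hnum.fun_div hden (pow_ne_zero 2 (hgen t x))).const_mul
    ((A:ℂ) * Complex.exp (2 * Complex.I * (A:ℂ)^2 * (t:ℂ)))).comp_ofReal
  -- conjugation facts
  have hcexp : (starRingEnd ℂ) (Complex.exp (2 * Complex.I * (A:ℂ)^2 * (t:ℂ)))
      = (Complex.exp (2 * Complex.I * (A:ℂ)^2 * (t:ℂ)))⁻¹ := by
    rw [← Complex.exp_conj, map_mul, map_mul, map_mul, map_pow, Complex.conj_I,
      Complex.conj_ofReal, Complex.conj_ofReal]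
    simp only [map_ofNat]
    rw [show (2:ℂ) * -Complex.I * (A:ℂ)^2 * (t:ℂ) = -(2 * Complex.I * (A:ℂ)^2 * (t:ℂ)) from by ring,
      Complex.exp_neg]
  have hconj : (starRingEnd ℂ) (u t x) = (A:ℂ) * (Complex.exp (2 * Complex.I * (A:ℂ)^2 * (t:ℂ)))⁻¹ *
      ((3 - 16 * Complex.I * (A:ℂ)^2 * (t:ℂ) - 16 * (A:ℂ)^4 * (t:ℂ)^2 - 4 * (A:ℂ)^2 * (x:ℂ)^2) /
        (1 + 16 * (A:ℂ)^4 * (t:ℂ)^2 + 4 * (A:ℂ)^2 * (x:ℂ)^2)) := by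
    rw [hu t x]
    simp only [map_mul, map_div₀, map_sub, map_add, map_pow, map_one, map_ofNat,
      Complex.conj_ofReal, Complex.conj_I, hcexp]
    ring
  have habs : ((‖u t x‖ ^ 2 : ℝ) : ℂ) = u t x * (starRingEnd ℂ) (u t x) := by
    rw [Complex.mul_conj]
    norm_cast
    exact Complex.sq_norm _
  -- assemble
  rw [hut, hx1, hUxx.deriv, habs, hconj, hu t x]
  have hD := hgen t x
  have hEne := Complex.exp_ne_zero (2 * Complex.I * (A:ℂ)^2 * (t:ℂ))
  have h2 : Complex.I ^ 2 = -1 := Complex.I_sq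
  have h3 : Complex.I ^ 3 = -Complex.I := by rw [pow_succ, h2]; ring
  have h4 : Complex.I ^ 4 = 1 := by rw [pow_succ, h3]; simp [Complex.I_mul_I]
  field_simp
  ring_nf
  simp only [h2, h3, h4]
  ring
end

section
/- Fix real parameters A, δ₀, ε₀, γ₀, κ₀. Then the function ψ defined for t > 0 and x ∈ ℝ by ψ(t,x) = (A/sqrt(1 + sinh(t))) · tanh( A·( (2x·csch(t) − 2δ₀)/(csch(t) + 1) + ε₀ ) ) · exp( i·(−x² + 2δ₀·x·csch(t) − δ₀² − 8A²)/(2 + 2·csch(t)) ) · exp( i·(κ₀ + 2A²·γ₀) ) satisfies at every (t,x) with t > 0 the nonautonomous nonlinear Schrödinger equation i·ψ_t = −(1/2)·cosh(t)·ψ_xx + (1/2)·cosh(t)·(x² − i)·ψ − i·x·cosh(t)·ψ_x + ( 4·cosh(t)/(1 + sinh(t)) )·|ψ|²·ψ. -/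
lemma myHasDerivAt_tanh (x : ℝ) : HasDerivAt Real.tanh (1 - Real.tanh x ^ 2) x := by
  have h := (Real.hasDerivAt_sinh x).div (Real.hasDerivAt_cosh x) (Real.cosh_pos x).ne'
  rw [show Real.sinh / Real.cosh = Real.tanh from funext fun y => (Real.tanh_eq_sinh_div_cosh y).symm] at h
  refine h.congr_deriv (Eq.symm ?_)
  have hc := (Real.cosh_pos x).ne'
  rw [Real.tanh_eq_sinh_div_cosh]
  field_simp

noncomputable def XX (A δ₀ ε₀ t x : ℝ) : ℝ :=
  A * ((2 * x * (1 / Real.sinh t) - 2 * δ₀) / (1 / Real.sinh t + 1) + ε₀)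

noncomputable def PP (A δ₀ t x : ℝ) : ℝ :=
  (-x ^ 2 + 2 * δ₀ * x * (1 / Real.sinh t) - δ₀ ^ 2 - 8 * A ^ 2) / (2 + 2 * (1 / Real.sinh t))

lemma hXx (A δ₀ ε₀ t x : ℝ) (hs : 0 < Real.sinh t) :
    HasDerivAt (fun y => XX A δ₀ ε₀ t y) (2 * A / (1 + Real.sinh t)) x := by
  have h1 : HasDerivAt (fun y : ℝ => 2 * y * (1 / Real.sinh t) - 2 * δ₀) (2 * (1 / Real.sinh t)) x := by
    simpa using (((hasDerivAt_id x).const_mul (2 : ℝ)).mul_const (1 / Real.sinh t)).sub_const (2 * δ₀)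
  have h2 := ((h1.div_const (1 / Real.sinh t + 1)).add_const ε₀).const_mul A
  refine h2.congr_deriv (Eq.symm ?_)
  have : Real.sinh t ≠ 0 := hs.ne'
  have : (1:ℝ) + Real.sinh t ≠ 0 := by positivity
  field_simp

lemma hPx (A δ₀ t x : ℝ) (hs : 0 < Real.sinh t) :
    HasDerivAt (fun y => PP A δ₀ t y) ((δ₀ - Real.sinh t * x) / (1 + Real.sinh t)) x := by
  have h1 : HasDerivAt (fun y : ℝ => -y ^ 2 + 2 * δ₀ * y * (1 / Real.sinh t) - δ₀ ^ 2 - 8 * A ^ 2)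
      (-(2 * x) + 2 * δ₀ * (1 / Real.sinh t)) x := by
    have ha : HasDerivAt (fun y : ℝ => -y ^ 2) (-(2 * x)) x := by
      exact (hasDerivAt_pow 2 x).neg.congr_deriv (by simp)
    have hb : HasDerivAt (fun y : ℝ => 2 * δ₀ * y * (1 / Real.sinh t)) (2 * δ₀ * (1 / Real.sinh t)) x := by
      simpa [mul_comm, mul_assoc] using ((hasDerivAt_id x).const_mul (2 * δ₀)).mul_const (1 / Real.sinh t)
    simpa using ((ha.add hb).sub_const (δ₀ ^ 2)).sub_const (8 * A ^ 2)
  have h2 := h1.div_const (2 + 2 * (1 / Real.sinh t))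
  refine h2.congr_deriv (Eq.symm ?_)
  have hz : Real.sinh t ≠ 0 := hs.ne'
  have : (1:ℝ) + Real.sinh t ≠ 0 := by positivity
  field_simp [PP]
  ring

lemma hinv (t : ℝ) (hs : 0 < Real.sinh t) :
    HasDerivAt (fun u => 1 / Real.sinh u) (-(Real.cosh t / Real.sinh t ^ 2)) t := by
  have h := (hasDerivAt_const t (1:ℝ)).div (Real.hasDerivAt_sinh t) hs.ne'
  refine h.congr_deriv (Eq.symm ?_)
  field_simp
  ring

lemma hXt (A δ₀ ε₀ t x : ℝ) (hs : 0 < Real.sinh t) :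
    HasDerivAt (fun u => XX A δ₀ ε₀ u x)
      (-(2 * A * Real.cosh t * (x + δ₀)) / (1 + Real.sinh t) ^ 2) t := by
  have hi := hinv t hs
  have hnum : HasDerivAt (fun u => 2 * x * (1 / Real.sinh u) - 2 * δ₀)
      (2 * x * (-(Real.cosh t / Real.sinh t ^ 2))) t := by
    simpa using (hi.const_mul (2 * x)).sub_const (2 * δ₀)
  have hden : HasDerivAt (fun u => 1 / Real.sinh u + 1)
      (-(Real.cosh t / Real.sinh t ^ 2)) t := by
    simpa using hi.add_const 1
  have hden0 : 1 / Real.sinh t + 1 ≠ 0 := by positivity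
  have h := ((hnum.div hden hden0).add_const ε₀).const_mul A
  refine h.congr_deriv (Eq.symm ?_)
  have hz : Real.sinh t ≠ 0 := hs.ne'
  have h1 : (1:ℝ) + Real.sinh t ≠ 0 := by positivity
  field_simp
  ring

lemma hPt (A δ₀ t x : ℝ) (hs : 0 < Real.sinh t) :
    HasDerivAt (fun u => PP A δ₀ u x)
      (-(Real.cosh t * ((x + δ₀) ^ 2 + 8 * A ^ 2)) / (2 * (1 + Real.sinh t) ^ 2)) t := by
  have hi := hinv t hs
  have hnum : HasDerivAt (fun u => -x ^ 2 + 2 * δ₀ * x * (1 / Real.sinh u) - δ₀ ^ 2 - 8 * A ^ 2)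
      (2 * δ₀ * x * (-(Real.cosh t / Real.sinh t ^ 2))) t := by
    simpa using (((hi.const_mul (2 * δ₀ * x)).const_add (-x ^ 2)).sub_const (δ₀ ^ 2)).sub_const (8 * A ^ 2)
  have hden : HasDerivAt (fun u => 2 + 2 * (1 / Real.sinh u))
      (2 * -(Real.cosh t / Real.sinh t ^ 2)) t := by
    simpa using (hi.const_mul 2).const_add 2
  have hden0 : 2 + 2 * (1 / Real.sinh t) ≠ 0 := by positivity
  have h := hnum.div hden hden0
  refine h.congr_deriv (Eq.symm ?_)
  have hz : Real.sinh t ≠ 0 := hs.ne'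
  have h1 : (1:ℝ) + Real.sinh t ≠ 0 := by positivity
  field_simp [PP]
  ring

lemma hAt (A t : ℝ) (hs : 0 < Real.sinh t) :
    HasDerivAt (fun u => A / Real.sqrt (1 + Real.sinh u))
      (-(A * Real.cosh t) / (2 * (1 + Real.sinh t) * Real.sqrt (1 + Real.sinh t))) t := by
  have h1 : (0:ℝ) < 1 + Real.sinh t := by positivity
  have hq : HasDerivAt (fun u => Real.sqrt (1 + Real.sinh u))
      (1 / (2 * Real.sqrt (1 + Real.sinh t)) * Real.cosh t) t :=
    (Real.hasDerivAt_sqrt h1.ne').comp t ((Real.hasDerivAt_sinh t).const_add 1)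
  have hq0 : Real.sqrt (1 + Real.sinh t) ≠ 0 := (Real.sqrt_pos.mpr h1).ne'
  have h := (hasDerivAt_const t A).div hq hq0
  refine h.congr_deriv (Eq.symm ?_)
  have hm : Real.sqrt (1 + Real.sinh t) * Real.sqrt (1 + Real.sinh t) = 1 + Real.sinh t :=
    Real.mul_self_sqrt h1.le
  rw [Real.sq_sqrt h1.le]
  field_simp
  ring

noncomputable def FF (A δ₀ ε₀ K t x : ℝ) : ℂ :=
  ((A / Real.sqrt (1 + Real.sinh t) : ℝ) : ℂ) * ((Real.tanh (XX A δ₀ ε₀ t x) : ℝ) : ℂ) *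
  Complex.exp (Complex.I * ((PP A δ₀ t x : ℝ) : ℂ)) * Complex.exp (Complex.I * ((K : ℝ) : ℂ))

noncomputable def GG (A δ₀ ε₀ K t x : ℝ) : ℂ :=
  ( ((A / Real.sqrt (1 + Real.sinh t) * ((1 - Real.tanh (XX A δ₀ ε₀ t x) ^ 2) *
        (2 * A / (1 + Real.sinh t))) : ℝ) : ℂ)
  + ((A / Real.sqrt (1 + Real.sinh t) * (Real.tanh (XX A δ₀ ε₀ t x) *
        ((δ₀ - Real.sinh t * x) / (1 + Real.sinh t))) : ℝ) : ℂ) * Complex.I )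
  * Complex.exp (Complex.I * ((PP A δ₀ t x : ℝ) : ℂ)) * Complex.exp (Complex.I * ((K : ℝ) : ℂ))

lemma hFx (A δ₀ ε₀ K t x : ℝ) (hs : 0 < Real.sinh t) :
    HasDerivAt (fun y => FF A δ₀ ε₀ K t y) (GG A δ₀ ε₀ K t x) x := by
  have hT : HasDerivAt (fun y => Real.tanh (XX A δ₀ ε₀ t y))
      ((1 - Real.tanh (XX A δ₀ ε₀ t x) ^ 2) * (2 * A / (1 + Real.sinh t))) x :=
    (myHasDerivAt_tanh _).comp x (hXx A δ₀ ε₀ t x hs)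
  have hE : HasDerivAt (fun y => Complex.exp (Complex.I * ((PP A δ₀ t y : ℝ) : ℂ)))
      (Complex.exp (Complex.I * ((PP A δ₀ t x : ℝ) : ℂ)) *
        (Complex.I * (((δ₀ - Real.sinh t * x) / (1 + Real.sinh t) : ℝ) : ℂ))) x :=
    (((hPx A δ₀ t x hs).ofReal_comp).const_mul Complex.I).cexp
  have h := (((hT.ofReal_comp).const_mul ((A / Real.sqrt (1 + Real.sinh t) : ℝ) : ℂ)).mul hE).mul_const
      (Complex.exp (Complex.I * ((K : ℝ) : ℂ)))
  refine h.congr_deriv (Eq.symm ?_)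
  unfold GG
  push_cast
  ring

lemma hFt (A δ₀ ε₀ K t x : ℝ) (hs : 0 < Real.sinh t) :
    HasDerivAt (fun u => FF A δ₀ ε₀ K u x)
      (( (((-(A * Real.cosh t) / (2 * (1 + Real.sinh t) * Real.sqrt (1 + Real.sinh t))) *
             Real.tanh (XX A δ₀ ε₀ t x)
           + A / Real.sqrt (1 + Real.sinh t) * ((1 - Real.tanh (XX A δ₀ ε₀ t x) ^ 2) *
             (-(2 * A * Real.cosh t * (x + δ₀)) / (1 + Real.sinh t) ^ 2)) : ℝ) : ℂ)
        + ((A / Real.sqrt (1 + Real.sinh t) * Real.tanh (XX A δ₀ ε₀ t x) *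
             (-(Real.cosh t * ((x + δ₀) ^ 2 + 8 * A ^ 2)) / (2 * (1 + Real.sinh t) ^ 2)) : ℝ) : ℂ) *
          Complex.I )
       * Complex.exp (Complex.I * ((PP A δ₀ t x : ℝ) : ℂ)) *
         Complex.exp (Complex.I * ((K : ℝ) : ℂ))) t := by
  have hTt : HasDerivAt (fun u => Real.tanh (XX A δ₀ ε₀ u x))
      ((1 - Real.tanh (XX A δ₀ ε₀ t x) ^ 2) *
        (-(2 * A * Real.cosh t * (x + δ₀)) / (1 + Real.sinh t) ^ 2)) t :=
    (myHasDerivAt_tanh _).comp t (hXt A δ₀ ε₀ t x hs)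
  have hEt : HasDerivAt (fun u => Complex.exp (Complex.I * ((PP A δ₀ u x : ℝ) : ℂ)))
      (Complex.exp (Complex.I * ((PP A δ₀ t x : ℝ) : ℂ)) *
        (Complex.I * ((-(Real.cosh t * ((x + δ₀) ^ 2 + 8 * A ^ 2)) /
          (2 * (1 + Real.sinh t) ^ 2) : ℝ) : ℂ))) t :=
    (((hPt A δ₀ t x hs).ofReal_comp).const_mul Complex.I).cexp
  have h := ((((hAt A t hs).ofReal_comp).mul hTt.ofReal_comp).mul hEt).mul_const
      (Complex.exp (Complex.I * ((K : ℝ) : ℂ)))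
  refine h.congr_deriv (Eq.symm ?_)
  simp only [Pi.mul_apply]
  push_cast
  ring

lemma hGx (A δ₀ ε₀ K t x : ℝ) (hs : 0 < Real.sinh t) :
    HasDerivAt (fun y => GG A δ₀ ε₀ K t y)
      (( ((-(2 * Real.tanh (XX A δ₀ ε₀ t x) * ((1 - Real.tanh (XX A δ₀ ε₀ t x) ^ 2) *
              (2 * A / (1 + Real.sinh t)))) * (A / Real.sqrt (1 + Real.sinh t)) *
              (2 * A / (1 + Real.sinh t))
           - A / Real.sqrt (1 + Real.sinh t) * Real.tanh (XX A δ₀ ε₀ t x) *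
              ((δ₀ - Real.sinh t * x) / (1 + Real.sinh t)) ^ 2 : ℝ) : ℂ)
        + ((A / Real.sqrt (1 + Real.sinh t) * Real.tanh (XX A δ₀ ε₀ t x) *
              (-Real.sinh t / (1 + Real.sinh t))
           + 2 * (A / Real.sqrt (1 + Real.sinh t) * ((1 - Real.tanh (XX A δ₀ ε₀ t x) ^ 2) *
              (2 * A / (1 + Real.sinh t)))) * ((δ₀ - Real.sinh t * x) / (1 + Real.sinh t)) : ℝ) : ℂ) *
          Complex.I )
       * Complex.exp (Complex.I * ((PP A δ₀ t x : ℝ) : ℂ)) *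
         Complex.exp (Complex.I * ((K : ℝ) : ℂ))) x := by
  have hT : HasDerivAt (fun y => Real.tanh (XX A δ₀ ε₀ t y))
      ((1 - Real.tanh (XX A δ₀ ε₀ t x) ^ 2) * (2 * A / (1 + Real.sinh t))) x :=
    (myHasDerivAt_tanh _).comp x (hXx A δ₀ ε₀ t x hs)
  have hD : HasDerivAt (fun y => (1 - Real.tanh (XX A δ₀ ε₀ t y) ^ 2) * (2 * A / (1 + Real.sinh t)))
      (-(2 * Real.tanh (XX A δ₀ ε₀ t x) *
        ((1 - Real.tanh (XX A δ₀ ε₀ t x) ^ 2) * (2 * A / (1 + Real.sinh t)))) *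
        (2 * A / (1 + Real.sinh t))) x := by
    have h := ((hT.pow 2).const_sub 1).mul_const (2 * A / (1 + Real.sinh t))
    refine h.congr_deriv (Eq.symm ?_)
    push_cast
    ring
  have hpx : HasDerivAt (fun y : ℝ => (δ₀ - Real.sinh t * y) / (1 + Real.sinh t))
      (-Real.sinh t / (1 + Real.sinh t)) x := by
    have h := (((hasDerivAt_id x).const_mul (Real.sinh t)).const_sub δ₀).div_const (1 + Real.sinh t)
    refine h.congr_deriv (Eq.symm ?_)
    ring
  have hE : HasDerivAt (fun y => Complex.exp (Complex.I * ((PP A δ₀ t y : ℝ) : ℂ)))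
      (Complex.exp (Complex.I * ((PP A δ₀ t x : ℝ) : ℂ)) *
        (Complex.I * (((δ₀ - Real.sinh t * x) / (1 + Real.sinh t) : ℝ) : ℂ))) x :=
    (((hPx A δ₀ t x hs).ofReal_comp).const_mul Complex.I).cexp
  have hA1 := ((hD.const_mul (A / Real.sqrt (1 + Real.sinh t))).ofReal_comp)
  have hA2 := ((((hT.mul hpx).const_mul (A / Real.sqrt (1 + Real.sinh t))).ofReal_comp).mul_const Complex.I)
  have h := ((hA1.add hA2).mul hE).mul_const (Complex.exp (Complex.I * ((K : ℝ) : ℂ)))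
  refine h.congr_deriv (Eq.symm ?_)
  simp only [Pi.mul_apply, Pi.add_apply]
  push_cast [-Complex.ofReal_sinh, -Complex.ofReal_cosh, -Complex.ofReal_tanh]
  linear_combination (-((A : ℂ) / ((Real.sqrt (1 + Real.sinh t) : ℝ) : ℂ) *
      (((Real.tanh (XX A δ₀ ε₀ t x) : ℝ) : ℂ) * (((δ₀ : ℂ) - ((Real.sinh t : ℝ) : ℂ) * ((x : ℝ) : ℂ)) / (1 + ((Real.sinh t : ℝ) : ℂ)))) *
      (((δ₀ : ℂ) - ((Real.sinh t : ℝ) : ℂ) * ((x : ℝ) : ℂ)) / (1 + ((Real.sinh t : ℝ) : ℂ))) *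
      Complex.exp (Complex.I * ((PP A δ₀ t x : ℝ) : ℂ)) *
      Complex.exp (Complex.I * ((K : ℝ) : ℂ)))) * Complex.I_sq

lemma hIm (A δ₀ x s c q T : ℝ) (h1 : 1 + s ≠ 0) (hq : q ≠ 0) :
    (-(A * c) / (2 * (1 + s) * q)) * T
      + (A / q) * ((1 - T ^ 2) * (-(2 * A * c * (x + δ₀)) / (1 + s) ^ 2))
    = -(1/2) * c * ((A / q) * T * (-s / (1 + s))
          + 2 * ((A / q) * ((1 - T ^ 2) * (2 * A / (1 + s)))) * ((δ₀ - s * x) / (1 + s)))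
      - (1/2) * c * ((A / q) * T)
      - x * c * ((A / q) * ((1 - T ^ 2) * (2 * A / (1 + s)))) := by
  field_simp
  ring

lemma hRe (A δ₀ x s c q T : ℝ) (h1 : 1 + s ≠ 0) (hq : q ≠ 0) :
    -((A / q) * T * (-(c * ((x + δ₀) ^ 2 + 8 * A ^ 2)) / (2 * (1 + s) ^ 2)))
    = -(1/2) * c * (-(2 * T * ((1 - T ^ 2) * (2 * A / (1 + s)))) * (A / q) * (2 * A / (1 + s))
          - (A / q) * T * ((δ₀ - s * x) / (1 + s)) ^ 2)
      + (1/2) * c * x ^ 2 * ((A / q) * T)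
      + x * c * ((A / q) * T * ((δ₀ - s * x) / (1 + s)))
      + (4 * c / (1 + s)) * (A ^ 2 / (1 + s) * T ^ 2) * ((A / q) * T) := by
  field_simp
  ring

set_option maxHeartbeats 1000000 in
/-- The explicit dark-soliton solution (g2) of Section 4.2: for `t > 0` the stated
function solves `i ψ_t = -½ cosh t ψ_xx + ½ cosh t (x² - i) ψ - i x cosh t ψ_x
+ (4 cosh t/(1 + sinh t)) |ψ|² ψ`. -/
theorem stmt16
    (A δ₀ ε₀ γ₀ κ₀ : ℝ)
    (ψ : ℝ → ℝ → ℂ)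
    (hψ : ∀ t : ℝ, 0 < t → ∀ x : ℝ, ψ t x =
      ((A / Real.sqrt (1 + Real.sinh t) : ℝ) : ℂ) *
      ((Real.tanh (A * ((2 * x * (1 / Real.sinh t) - 2 * δ₀) / (1 / Real.sinh t + 1)
          + ε₀)) : ℝ) : ℂ) *
      Complex.exp (Complex.I *
        (((-x ^ 2 + 2 * δ₀ * x * (1 / Real.sinh t) - δ₀ ^ 2 - 8 * A ^ 2) /
          (2 + 2 * (1 / Real.sinh t)) : ℝ) : ℂ)) *
      Complex.exp (Complex.I * ((κ₀ + 2 * A ^ 2 * γ₀ : ℝ) : ℂ))) :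
    ∀ t : ℝ, 0 < t → ∀ x : ℝ,
      Complex.I * deriv (fun t' => ψ t' x) t =
        -(1 / 2 : ℂ) * (Real.cosh t : ℂ) * deriv (fun x' => deriv (fun x'' => ψ t x'') x') x
        + (1 / 2 : ℂ) * (Real.cosh t : ℂ) * ((x : ℂ) ^ 2 - Complex.I) * ψ t x
        - Complex.I * (x : ℂ) * (Real.cosh t : ℂ) * deriv (fun x' => ψ t x') x
        + ((4 * Real.cosh t / (1 + Real.sinh t) : ℝ) : ℂ) *
          ((‖ψ t x‖ ^ 2 : ℝ) : ℂ) * ψ t x := by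
  intro t ht x
  have hs : 0 < Real.sinh t := Real.sinh_pos_iff.mpr ht
  have h1 : (0:ℝ) < 1 + Real.sinh t := by positivity
  have hq0 : Real.sqrt (1 + Real.sinh t) ≠ 0 := (Real.sqrt_pos.mpr h1).ne'
  set K := κ₀ + 2 * A ^ 2 * γ₀ with hK
  have hψ' : ∀ y, ψ t y = FF A δ₀ ε₀ K t y := fun y => by rw [hψ t ht y]; rfl
  have hev : (fun t' => ψ t' x) =ᶠ[nhds t] fun t' => FF A δ₀ ε₀ K t' x := by
    filter_upwards [isOpen_Ioi.mem_nhds ht] with u hu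
    rw [hψ u hu x]; rfl
  have e1 := hev.deriv_eq.trans (hFt A δ₀ ε₀ K t x hs).deriv
  have e2 : deriv (fun x' => ψ t x') x = GG A δ₀ ε₀ K t x := by
    rw [show (fun x' => ψ t x') = fun x' => FF A δ₀ ε₀ K t x' from funext hψ']
    exact (hFx A δ₀ ε₀ K t x hs).deriv
  have e3 := (hGx A δ₀ ε₀ K t x hs).deriv
  have e4 : (fun x' => deriv (fun x'' => ψ t x'') x') = fun x' => GG A δ₀ ε₀ K t x' := by
    funext y
    rw [show (fun x'' => ψ t x'') = fun x'' => FF A δ₀ ε₀ K t x'' from funext hψ']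
    exact (hFx A δ₀ ε₀ K t y hs).deriv
  have habs : ‖ψ t x‖ ^ 2
      = A ^ 2 / (1 + Real.sinh t) * Real.tanh (XX A δ₀ ε₀ t x) ^ 2 := by
    rw [hψ' x]
    unfold FF
    simp only [norm_mul, Complex.norm_real, Real.norm_eq_abs, Complex.norm_exp, Complex.mul_re,
      Complex.I_re, Complex.I_im, Complex.ofReal_re, Complex.ofReal_im,
      zero_mul, one_mul, mul_zero, zero_sub, neg_zero, Real.exp_zero, mul_one]
    rw [mul_pow, sq_abs, sq_abs, div_pow, Real.sq_sqrt h1.le]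
  rw [e1, e2, e4, e3, habs, hψ' x]
  unfold GG FF
  have hImC := congrArg (fun r : ℝ => (r : ℂ))
    (hIm A δ₀ x (Real.sinh t) (Real.cosh t) (Real.sqrt (1 + Real.sinh t))
      (Real.tanh (XX A δ₀ ε₀ t x)) h1.ne' hq0)
  have hReC := congrArg (fun r : ℝ => (r : ℂ))
    (hRe A δ₀ x (Real.sinh t) (Real.cosh t) (Real.sqrt (1 + Real.sinh t))
      (Real.tanh (XX A δ₀ ε₀ t x)) h1.ne' hq0)
  push_cast [-Complex.ofReal_sinh, -Complex.ofReal_cosh, -Complex.ofReal_tanh] at hImC hReC ⊢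
  linear_combination
    (Complex.exp (Complex.I * ((PP A δ₀ t x : ℝ) : ℂ)) * Complex.exp (Complex.I * ((K : ℝ) : ℂ))) *
      Complex.I * hImC
    + (Complex.exp (Complex.I * ((PP A δ₀ t x : ℝ) : ℂ)) * Complex.exp (Complex.I * ((K : ℝ) : ℂ))) * hReC
    + ( (A : ℂ) / ((Real.sqrt (1 + Real.sinh t) : ℝ) : ℂ) * ((Real.tanh (XX A δ₀ ε₀ t x) : ℝ) : ℂ) *
          (-(((Real.cosh t : ℝ) : ℂ) * (((x : ℝ) : ℂ) + ((δ₀ : ℝ) : ℂ)) ^ 2 + 8 * ((A : ℝ) : ℂ) ^ 2 * ((Real.cosh t : ℝ) : ℂ)) /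
            (2 * (1 + ((Real.sinh t : ℝ) : ℂ)) ^ 2))
        + ((x : ℝ) : ℂ) * ((Real.cosh t : ℝ) : ℂ) *
          ((A : ℂ) / ((Real.sqrt (1 + Real.sinh t) : ℝ) : ℂ) * (((Real.tanh (XX A δ₀ ε₀ t x) : ℝ) : ℂ) *
            ((((δ₀ : ℝ) : ℂ) - ((Real.sinh t : ℝ) : ℂ) * ((x : ℝ) : ℂ)) / (1 + ((Real.sinh t : ℝ) : ℂ))))) ) *
      (Complex.exp (Complex.I * ((PP A δ₀ t x : ℝ) : ℂ)) * Complex.exp (Complex.I * ((K : ℝ) : ℂ))) *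
      Complex.I_sq
end

section
/- Fix real parameters v < 0 and κ₀. Then the function ψ : ℝ × ℝ → ℂ defined by ψ(t,x) = sqrt(−2v/3) · sech( sqrt(−v)·x ) · exp( (3/2)·(cos(t) − 1) + i·( (x²/4)·sin(t) + κ₀ − v·t ) ) satisfies at every (t,x) ∈ ℝ × ℝ the equation i·ψ_t = −ψ_xx + (x²/4)·(sin²(t) − cos(t))·ψ + i·x·sin(t)·ψ_x − i·sin(t)·ψ − 3·e^{3 − 3·cos(t)}·|ψ|²·ψ. -/
lemma hdcongr17 {f : ℝ → ℂ} {d d' : ℂ} {x : ℝ} (h : HasDerivAt f d x) (hd : d' = d) :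
    HasDerivAt f d' x := hd ▸ h

lemma hdcongrR17 {f : ℝ → ℝ} {d d' : ℝ} {x : ℝ} (h : HasDerivAt f d x) (hd : d' = d) :
    HasDerivAt f d' x := hd ▸ h

noncomputable def sol17 (a b κ₀ v : ℝ) (s y : ℝ) : ℂ :=
  ((a / Real.cosh (b * y) : ℝ) : ℂ) *
    Complex.exp (((3 / 2 * (Real.cos s - 1) : ℝ) : ℂ) +
      Complex.I * ((y ^ 2 / 4 * Real.sin s + κ₀ - v * s : ℝ) : ℂ))

noncomputable def Efac17 (κ₀ v : ℝ) (s y : ℝ) : ℂ :=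
  Complex.exp (((3 / 2 * (Real.cos s - 1) : ℝ) : ℂ) +
    Complex.I * ((y ^ 2 / 4 * Real.sin s + κ₀ - v * s : ℝ) : ℂ))

noncomputable def D1x17 (a b κ₀ v : ℝ) (s y : ℝ) : ℂ :=
  (((-(a * b * Real.sinh (b * y)) / Real.cosh (b * y) ^ 2 : ℝ) : ℂ) +
      ((a / Real.cosh (b * y) : ℝ) : ℂ) * (Complex.I * ((y / 2 * Real.sin s : ℝ) : ℂ))) *
    Efac17 κ₀ v s y

noncomputable def D2x17 (a b κ₀ v : ℝ) (s y : ℝ) : ℂ :=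
  (((a * b ^ 2 * (2 * Real.sinh (b * y) ^ 2 - Real.cosh (b * y) ^ 2) / Real.cosh (b * y) ^ 3 : ℝ) : ℂ) +
      (((-(a * b * Real.sinh (b * y)) / Real.cosh (b * y) ^ 2 : ℝ) : ℂ) *
          (Complex.I * ((y / 2 * Real.sin s : ℝ) : ℂ)) +
        ((a / Real.cosh (b * y) : ℝ) : ℂ) * (Complex.I * ((Real.sin s / 2 : ℝ) : ℂ)))) *
    Efac17 κ₀ v s y +
  (((-(a * b * Real.sinh (b * y)) / Real.cosh (b * y) ^ 2 : ℝ) : ℂ) +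
      ((a / Real.cosh (b * y) : ℝ) : ℂ) * (Complex.I * ((y / 2 * Real.sin s : ℝ) : ℂ))) *
    (Efac17 κ₀ v s y * (Complex.I * ((y / 2 * Real.sin s : ℝ) : ℂ)))

lemma sol17_deriv_t (a b κ₀ v s y : ℝ) :
    HasDerivAt (fun s' => sol17 a b κ₀ v s' y)
      (sol17 a b κ₀ v s y *
        (((-(3 / 2) * Real.sin s : ℝ) : ℂ) +
          Complex.I * ((y ^ 2 / 4 * Real.cos s - v : ℝ) : ℂ))) s := by
  have hp : HasDerivAt (fun s' => 3 / 2 * (Real.cos s' - 1)) (-(3 / 2) * Real.sin s) s := by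
    have := ((Real.hasDerivAt_cos s).sub_const 1).const_mul (3 / 2)
    refine hdcongrR17 this ?_; (try simp only [id_eq]); ring
  have hq : HasDerivAt (fun s' => y ^ 2 / 4 * Real.sin s' + κ₀ - v * s')
      (y ^ 2 / 4 * Real.cos s - v) s := by
    have := (((Real.hasDerivAt_sin s).const_mul (y ^ 2 / 4)).add_const κ₀).sub
      ((hasDerivAt_id s).const_mul v)
    refine hdcongrR17 this ?_; (try simp only [id_eq]); ring
  have hG := (hp.ofReal_comp).add ((hq.ofReal_comp).const_mul Complex.I)
  have h := (hG.cexp).const_mul ((a / Real.cosh (b * y) : ℝ) : ℂ)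
  exact hdcongr17 h (by unfold sol17; simp only [Pi.add_apply]; ring)

lemma cosh_hd17 (b y : ℝ) :
    HasDerivAt (fun y' => Real.cosh (b * y')) (b * Real.sinh (b * y)) y := by
  have := ((hasDerivAt_id y).const_mul b).cosh
  refine hdcongrR17 this ?_; (try simp only [id_eq]); ring

lemma amp_hd17 (a b y : ℝ) :
    HasDerivAt (fun y' => a / Real.cosh (b * y'))
      (-(a * b * Real.sinh (b * y)) / Real.cosh (b * y) ^ 2) y := by
  have h := (hasDerivAt_const y a).div (cosh_hd17 b y) (ne_of_gt (Real.cosh_pos _))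
  refine hdcongrR17 h ?_; (try simp only [id_eq]); ring

lemma lin_hd17 (s y : ℝ) :
    HasDerivAt (fun y' => y' / 2 * Real.sin s) (Real.sin s / 2) y := by
  have := ((hasDerivAt_id y).div_const 2).mul_const (Real.sin s)
  refine hdcongrR17 this ?_; (try simp only [id_eq]); ring

lemma expfac_hd17 (κ₀ v s y : ℝ) :
    HasDerivAt (fun y' => Efac17 κ₀ v s y')
      (Efac17 κ₀ v s y * (Complex.I * ((y / 2 * Real.sin s : ℝ) : ℂ))) y := by
  have hq : HasDerivAt (fun y' => y' ^ 2 / 4 * Real.sin s + κ₀ - v * s)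
      (y / 2 * Real.sin s) y := by
    have := ((((hasDerivAt_pow 2 y).div_const 4).mul_const (Real.sin s)).add_const κ₀).sub_const (v * s)
    refine hdcongrR17 this ?_; push_cast; ring
  have hG := (hasDerivAt_const y ((3 / 2 * (Real.cos s - 1) : ℝ) : ℂ)).add
    ((hq.ofReal_comp).const_mul Complex.I)
  exact hdcongr17 hG.cexp (by unfold Efac17; simp only [Pi.add_apply]; ring)

lemma sol17_deriv_x (a b κ₀ v s y : ℝ) :
    HasDerivAt (fun y' => sol17 a b κ₀ v s y') (D1x17 a b κ₀ v s y) y := by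
  have h := ((amp_hd17 a b y).ofReal_comp).mul (expfac_hd17 κ₀ v s y)
  exact hdcongr17 h (by unfold D1x17 Efac17; ring)

lemma amp2_hd17 (a b y : ℝ) :
    HasDerivAt (fun y' => -(a * b * Real.sinh (b * y')) / Real.cosh (b * y') ^ 2)
      (a * b ^ 2 * (2 * Real.sinh (b * y) ^ 2 - Real.cosh (b * y) ^ 2) / Real.cosh (b * y) ^ 3) y := by
  have hnum : HasDerivAt (fun y' => -(a * b * Real.sinh (b * y')))
      (-(a * b * (b * Real.cosh (b * y)))) y := by
    have := ((((hasDerivAt_id y).const_mul b).sinh).const_mul (a * b)).neg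
    refine hdcongrR17 this ?_; (try simp only [id_eq]); ring
  have hden : HasDerivAt (fun y' => Real.cosh (b * y') ^ 2)
      (2 * Real.cosh (b * y) * (b * Real.sinh (b * y))) y := by
    have := (cosh_hd17 b y).pow 2
    refine hdcongrR17 this ?_; push_cast; ring
  have h := hnum.div hden (pow_ne_zero _ (ne_of_gt (Real.cosh_pos _)))
  refine hdcongrR17 h ?_
  have hc : Real.cosh (b * y) ≠ 0 := ne_of_gt (Real.cosh_pos _)
  field_simp
  ring

lemma sol17_deriv_xx (a b κ₀ v s y : ℝ) :
    HasDerivAt (fun y' => D1x17 a b κ₀ v s y') (D2x17 a b κ₀ v s y) y := by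
  have hA : HasDerivAt (fun y' =>
      ((-(a * b * Real.sinh (b * y')) / Real.cosh (b * y') ^ 2 : ℝ) : ℂ) +
        ((a / Real.cosh (b * y') : ℝ) : ℂ) * (Complex.I * ((y' / 2 * Real.sin s : ℝ) : ℂ)))
      (((a * b ^ 2 * (2 * Real.sinh (b * y) ^ 2 - Real.cosh (b * y) ^ 2) / Real.cosh (b * y) ^ 3 : ℝ) : ℂ) +
        (((-(a * b * Real.sinh (b * y)) / Real.cosh (b * y) ^ 2 : ℝ) : ℂ) *
            (Complex.I * ((y / 2 * Real.sin s : ℝ) : ℂ)) +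
          ((a / Real.cosh (b * y) : ℝ) : ℂ) * (Complex.I * ((Real.sin s / 2 : ℝ) : ℂ)))) y :=
    ((amp2_hd17 a b y).ofReal_comp).add
      (((amp_hd17 a b y).ofReal_comp).mul (((lin_hd17 s y).ofReal_comp).const_mul Complex.I))
  have h := hA.mul (expfac_hd17 κ₀ v s y)
  exact hdcongr17 h (by unfold D2x17; ring)

lemma abs_sol17 (v κ₀ a b t x : ℝ) (ha0 : 0 ≤ a) :
    ‖sol17 a b κ₀ v t x‖ ^ 2
      = (a / Real.cosh (b * x)) ^ 2 * Real.exp (3 * (Real.cos t - 1)) := by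
  have hf0 : 0 ≤ a / Real.cosh (b * x) := div_nonneg ha0 (Real.cosh_pos _).le
  unfold sol17
  rw [norm_mul, Complex.norm_real, Complex.norm_exp, Real.norm_of_nonneg hf0]
  have hre : (((3 / 2 * (Real.cos t - 1) : ℝ) : ℂ) +
      Complex.I * ((x ^ 2 / 4 * Real.sin t + κ₀ - v * t : ℝ) : ℂ)).re
      = 3 / 2 * (Real.cos t - 1) := by
    simp only [Complex.add_re, Complex.mul_re, Complex.I_re, Complex.I_im,
      Complex.ofReal_re, Complex.ofReal_im]; ring
  rw [hre, mul_pow, ← Real.exp_nat_mul]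
  norm_num
  left
  ring

lemma key17 (v a b x : ℝ) (hv : v < 0)
    (ha : a = Real.sqrt (-2 * v / 3)) (hb : b = Real.sqrt (-v)) :
    a * b ^ 2 * (2 * Real.sinh (b * x) ^ 2 - Real.cosh (b * x) ^ 2) / Real.cosh (b * x) ^ 3
      = -v * (a / Real.cosh (b * x)) - 3 * (a / Real.cosh (b * x)) ^ 3 := by
  have ha2 : a ^ 2 = -2 * v / 3 := by rw [ha]; exact Real.sq_sqrt (by linarith)
  have hb2 : b ^ 2 = -v := by rw [hb]; exact Real.sq_sqrt (by linarith)
  have hc : Real.cosh (b * x) ≠ 0 := ne_of_gt (Real.cosh_pos _)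
  have hsh : Real.sinh (b * x) ^ 2 = Real.cosh (b * x) ^ 2 - 1 := by
    have := Real.cosh_sq_sub_sinh_sq (b * x); linarith
  rw [hsh, hb2]
  field_simp
  linear_combination (3 * a) * ha2

/-- The periodic solution (Periodic1) of Section 4.4 for equation (sch1) with
`d(t) = sin t` and `h(t) = -3e^{3-3cos t}`. -/
theorem stmt17
    (v κ₀ : ℝ) (hv : v < 0)
    (ψ : ℝ → ℝ → ℂ)
    (hψ : ∀ t x : ℝ, ψ t x =
      ((Real.sqrt (-2 * v / 3) / Real.cosh (Real.sqrt (-v) * x) : ℝ) : ℂ) *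
      Complex.exp (((3 / 2 * (Real.cos t - 1) : ℝ) : ℂ) +
        Complex.I * ((x ^ 2 / 4 * Real.sin t + κ₀ - v * t : ℝ) : ℂ))) :
    ∀ t x : ℝ,
      Complex.I * deriv (fun t' => ψ t' x) t =
        -deriv (fun x' => deriv (fun x'' => ψ t x'') x') x
        + ((x ^ 2 / 4 * ((Real.sin t) ^ 2 - Real.cos t) : ℝ) : ℂ) * ψ t x
        + Complex.I * (x : ℂ) * (Real.sin t : ℂ) * deriv (fun x' => ψ t x') x
        - Complex.I * (Real.sin t : ℂ) * ψ t x
        - 3 * ((Real.exp (3 - 3 * Real.cos t) : ℝ) : ℂ) *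
          ((‖ψ t x‖ ^ 2 : ℝ) : ℂ) * ψ t x := by
  have hψ' : ψ = fun t x => sol17 (Real.sqrt (-2 * v / 3)) (Real.sqrt (-v)) κ₀ v t x := by
    funext t x; rw [hψ]; rfl
  subst hψ'
  intro t x
  set a := Real.sqrt (-2 * v / 3) with ha
  set b := Real.sqrt (-v) with hb
  have h1 : deriv (fun t' => sol17 a b κ₀ v t' x) t
      = sol17 a b κ₀ v t x *
        (((-(3 / 2) * Real.sin t : ℝ) : ℂ) +
          Complex.I * ((x ^ 2 / 4 * Real.cos t - v : ℝ) : ℂ)) :=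
    (sol17_deriv_t a b κ₀ v t x).deriv
  have h2 : (deriv fun x'' => sol17 a b κ₀ v t x'') = fun y => D1x17 a b κ₀ v t y :=
    funext fun y => (sol17_deriv_x a b κ₀ v t y).deriv
  have h3 : deriv (fun x' => D1x17 a b κ₀ v t x') x = D2x17 a b κ₀ v t x :=
    (sol17_deriv_xx a b κ₀ v t x).deriv
  simp only [h1, h2, h3]
  have habs2 : ((Real.exp (3 - 3 * Real.cos t) : ℝ) : ℂ) *
      ((‖sol17 a b κ₀ v t x‖ ^ 2 : ℝ) : ℂ)
      = (((a / Real.cosh (b * x)) ^ 2 : ℝ) : ℂ) := by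
    rw [abs_sol17 v κ₀ a b t x (ha ▸ Real.sqrt_nonneg _), ← Complex.ofReal_mul]
    congr 1
    rw [← mul_assoc, mul_comm (Real.exp _), mul_assoc, ← Real.exp_add,
      show 3 - 3 * Real.cos t + 3 * (Real.cos t - 1) = 0 by ring, Real.exp_zero, mul_one]
  rw [mul_assoc (3 : ℂ), habs2]
  have hkeyC : ((a * b ^ 2 * (2 * Real.sinh (b * x) ^ 2 - Real.cosh (b * x) ^ 2)
        / Real.cosh (b * x) ^ 3 : ℝ) : ℂ)
      = ((-v * (a / Real.cosh (b * x)) - 3 * (a / Real.cosh (b * x)) ^ 3 : ℝ) : ℂ) := by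
    exact congrArg (fun r : ℝ => (r : ℂ)) (key17 v a b x hv ha hb)
  unfold sol17 D1x17 D2x17 Efac17
  rw [hkeyC]
  push_cast
  ring_nf
  simp only [Complex.I_sq]
  ring
end

section
/- Fix real parameters v < 0 and κ₀. Then the function ψ : ℝ × ℝ → ℂ defined by ψ(t,x) = sqrt(−2v/3) · sech( sqrt(−v)·x ) · exp( i·( (x²/4)·sin(t) + κ₀ − v·t ) − t² ) satisfies at every (t,x) ∈ ℝ × ℝ the equation i·ψ_t = −ψ_xx + (x²/4)·(sin²(t) − cos(t))·ψ + i·x·sin(t)·ψ_x − i·((4t − sin(t))/2)·ψ − 3·e^{2t²}·|ψ|²·ψ. -/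
set_option maxHeartbeats 2000000 in

/-- The fast-decaying solution (FastDecay) of Section 4.4 for equation (sch1) with
`d(t) = (4t - sin t)/2` and `h(t) = -3e^{2t²}`. -/
theorem stmt18
    (v κ₀ : ℝ) (hv : v < 0)
    (ψ : ℝ → ℝ → ℂ)
    (hψ : ∀ t x : ℝ, ψ t x =
      ((Real.sqrt (-2 * v / 3) / Real.cosh (Real.sqrt (-v) * x) : ℝ) : ℂ) *
      Complex.exp (Complex.I * ((x ^ 2 / 4 * Real.sin t + κ₀ - v * t : ℝ) : ℂ)
        - ((t ^ 2 : ℝ) : ℂ))) :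
    ∀ t x : ℝ,
      Complex.I * deriv (fun t' => ψ t' x) t =
        -deriv (fun x' => deriv (fun x'' => ψ t x'') x') x
        + ((x ^ 2 / 4 * ((Real.sin t) ^ 2 - Real.cos t) : ℝ) : ℂ) * ψ t x
        + Complex.I * (x : ℂ) * (Real.sin t : ℂ) * deriv (fun x' => ψ t x') x
        - Complex.I * (((4 * t - Real.sin t) / 2 : ℝ) : ℂ) * ψ t x
        - 3 * ((Real.exp (2 * t ^ 2) : ℝ) : ℂ) *
          ((‖ψ t x‖ ^ 2 : ℝ) : ℂ) * ψ t x := by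
  intro t x
  set s : ℝ := Real.sqrt (-v) with hs
  set c : ℝ := Real.sqrt (-2 * v / 3) with hc
  have hs2 : s ^ 2 = -v := Real.sq_sqrt (by linarith)
  have hc2 : c ^ 2 = -2 * v / 3 := Real.sq_sqrt (by nlinarith)
  have hc0 : 0 ≤ c := Real.sqrt_nonneg _
  have hchpos : ∀ y : ℝ, 0 < Real.cosh (s * y) := fun y => Real.cosh_pos _
  have hch : ∀ y : ℝ, Real.cosh (s * y) ≠ 0 := fun y => (hchpos y).ne'
  -- abbreviations
  set P : ℝ → ℝ := fun y => c / Real.cosh (s * y) with hP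
  set P1 : ℝ → ℝ := fun y =>
    (0 * Real.cosh (s * y) - c * (Real.sinh (s * y) * s)) / Real.cosh (s * y) ^ 2 with hP1
  set E : ℝ → ℝ → ℂ := fun a b =>
    Complex.exp (Complex.I * ((b ^ 2 / 4 * Real.sin a + κ₀ - v * a : ℝ) : ℂ)
      - ((a ^ 2 : ℝ) : ℂ)) with hE
  -- derivative of cosh (s * y)
  have hcosh : ∀ y : ℝ, HasDerivAt (fun y => Real.cosh (s * y)) (Real.sinh (s * y) * s) y := by
    intro y
    have h1 : HasDerivAt (fun y : ℝ => s * y) s y := by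
      simpa using (hasDerivAt_id y).const_mul s
    exact (Real.hasDerivAt_cosh (s * y)).comp y h1
  -- derivative of P
  have hPd : ∀ y : ℝ, HasDerivAt P (P1 y) y := by
    intro y
    exact (hasDerivAt_const y c).div (hcosh y) (hch y)
  -- inner real function of x
  have hf2 : ∀ y : ℝ, HasDerivAt (fun b : ℝ => b ^ 2 / 4 * Real.sin t + κ₀ - v * t)
      (y / 2 * Real.sin t) y := by
    intro y
    have : HasDerivAt (fun b : ℝ => b ^ 2 / 4 * Real.sin t + κ₀ - v * t)
        ((↑2 * y ^ 1 / 4) * Real.sin t) y :=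
      ((((hasDerivAt_pow 2 y).div_const 4).mul_const (Real.sin t)).add_const κ₀).sub_const (v * t)
    convert this using 1; push_cast; ring
  -- derivative of E t · at y
  have hEd : ∀ y : ℝ, HasDerivAt (fun b => E t b)
      (E t y * (Complex.I * ((y / 2 * Real.sin t : ℝ) : ℂ))) y := by
    intro y
    exact (((hf2 y).ofReal_comp.const_mul Complex.I).sub_const _).cexp
  -- the function x ↦ ψ t x
  have hψx : (fun x'' => ψ t x'') = fun x'' => ((P x'' : ℝ) : ℂ) * E t x'' := by
    funext y; exact hψ t y
  -- first x-derivative, as a function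
  set D : ℝ → ℂ := fun y =>
    ((P1 y : ℝ) : ℂ) * E t y
      + ((P y : ℝ) : ℂ) * (E t y * (Complex.I * ((y / 2 * Real.sin t : ℝ) : ℂ))) with hD
  have hDd : ∀ y : ℝ, HasDerivAt (fun x'' => ψ t x'') (D y) y := by
    intro y
    rw [hψx]
    exact ((hPd y).ofReal_comp).mul (hEd y)
  have hderiv1 : (fun x' => deriv (fun x'' => ψ t x'') x') = D := by
    funext y; exact (hDd y).deriv
  -- sinh derivative
  have hsinh : ∀ y : ℝ, HasDerivAt (fun y => Real.sinh (s * y)) (Real.cosh (s * y) * s) y := by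
    intro y
    have h1 : HasDerivAt (fun y : ℝ => s * y) s y := by
      simpa using (hasDerivAt_id y).const_mul s
    exact (Real.hasDerivAt_sinh (s * y)).comp y h1
  -- derivative of P1 at x
  set P2 : ℝ := ((0 * (Real.sinh (s * x) * s) - c * (Real.cosh (s * x) * s * s)) * Real.cosh (s * x) ^ 2
      - (0 * Real.cosh (s * x) - c * (Real.sinh (s * x) * s)) * (↑2 * Real.cosh (s * x) ^ 1 * (Real.sinh (s * x) * s)))
      / (Real.cosh (s * x) ^ 2) ^ 2 with hP2
  have hP1d : HasDerivAt P1 P2 x := by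
    have hnum : HasDerivAt (fun y => 0 * Real.cosh (s * y) - c * (Real.sinh (s * y) * s))
        (0 * (Real.sinh (s * x) * s) - c * (Real.cosh (s * x) * s * s)) x := by
      have h1 := ((hcosh x).const_mul 0)
      have h2 := (((hsinh x).mul_const s).const_mul c)
      exact h1.sub h2
    have hden : HasDerivAt (fun y => Real.cosh (s * y) ^ 2)
        (↑2 * Real.cosh (s * x) ^ 1 * (Real.sinh (s * x) * s)) x := (hcosh x).pow 2
    exact hnum.div hden (pow_ne_zero 2 (hch x))
  -- linear factor derivative
  have hlin : HasDerivAt (fun y : ℝ => y / 2 * Real.sin t) (Real.sin t / 2) x := by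
    have := ((hasDerivAt_id x).div_const 2).mul_const (Real.sin t)
    exact this.congr_deriv (by ring)
  -- second x-derivative
  have hD2 : HasDerivAt D
      (((P2 : ℝ) : ℂ) * E t x + ((P1 x : ℝ) : ℂ) * (E t x * (Complex.I * ((x / 2 * Real.sin t : ℝ) : ℂ)))
        + (((P1 x : ℝ) : ℂ) * (E t x * (Complex.I * ((x / 2 * Real.sin t : ℝ) : ℂ)))
          + ((P x : ℝ) : ℂ) * (E t x * (Complex.I * ((x / 2 * Real.sin t : ℝ) : ℂ)) * (Complex.I * ((x / 2 * Real.sin t : ℝ) : ℂ))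
            + E t x * (Complex.I * ((Real.sin t / 2 : ℝ) : ℂ))))) x := by
    have hA : HasDerivAt (fun y => ((P1 y : ℝ) : ℂ) * E t y)
        (((P2 : ℝ) : ℂ) * E t x + ((P1 x : ℝ) : ℂ) * (E t x * (Complex.I * ((x / 2 * Real.sin t : ℝ) : ℂ)))) x :=
      (hP1d.ofReal_comp).mul (hEd x)
    have hB : HasDerivAt (fun y => ((P y : ℝ) : ℂ) * (E t y * (Complex.I * ((y / 2 * Real.sin t : ℝ) : ℂ))))
        (((P1 x : ℝ) : ℂ) * (E t x * (Complex.I * ((x / 2 * Real.sin t : ℝ) : ℂ)))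
          + ((P x : ℝ) : ℂ) * (E t x * (Complex.I * ((x / 2 * Real.sin t : ℝ) : ℂ)) * (Complex.I * ((x / 2 * Real.sin t : ℝ) : ℂ))
            + E t x * (Complex.I * ((Real.sin t / 2 : ℝ) : ℂ)))) x := by
      have hprod : HasDerivAt (fun y => E t y * (Complex.I * ((y / 2 * Real.sin t : ℝ) : ℂ)))
          (E t x * (Complex.I * ((x / 2 * Real.sin t : ℝ) : ℂ)) * (Complex.I * ((x / 2 * Real.sin t : ℝ) : ℂ))
            + E t x * (Complex.I * ((Real.sin t / 2 : ℝ) : ℂ))) x :=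
        (hEd x).mul ((hlin.ofReal_comp).const_mul Complex.I)
      exact ((hPd x).ofReal_comp).mul hprod
    exact hA.add hB
  -- t-derivative
  have hψt : (fun t' => ψ t' x) = fun t' => ((P x : ℝ) : ℂ) * E t' x := by
    funext a; exact hψ a x
  have hf1 : HasDerivAt (fun t' : ℝ => x ^ 2 / 4 * Real.sin t' + κ₀ - v * t')
      (x ^ 2 / 4 * Real.cos t - v) t := by
    have := (((Real.hasDerivAt_sin t).const_mul (x ^ 2 / 4)).add_const κ₀).sub
      ((hasDerivAt_id t).const_mul v)
    exact this.congr_deriv (by ring)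
  have ht2 : HasDerivAt (fun t' : ℝ => t' ^ 2) (2 * t) t := by
    have := hasDerivAt_pow 2 t
    exact this.congr_deriv (by norm_num)
  have hEt : HasDerivAt (fun t' => E t' x)
      (E t x * (Complex.I * ((x ^ 2 / 4 * Real.cos t - v : ℝ) : ℂ) - ((2 * t : ℝ) : ℂ))) t :=
    ((hf1.ofReal_comp.const_mul Complex.I).sub ht2.ofReal_comp).cexp
  have hψtd : HasDerivAt (fun t' => ψ t' x)
      (((P x : ℝ) : ℂ) * (E t x * (Complex.I * ((x ^ 2 / 4 * Real.cos t - v : ℝ) : ℂ) - ((2 * t : ℝ) : ℂ)))) t := by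
    rw [hψt]; exact hEt.const_mul _
  -- abs value
  have h1 : ‖ψ t x‖ = P x * Real.exp (-(t ^ 2)) := by
    rw [hψ t x, norm_mul, Complex.norm_real, Complex.norm_exp]
    congr 1
    · exact abs_of_nonneg (div_nonneg hc0 (hchpos x).le)
    · congr 1
      generalize (x ^ 2 / 4 * Real.sin t + κ₀ - v * t : ℝ) = r
      simp [← Complex.ofReal_pow]
  have habs : Real.exp (2 * t ^ 2) * ‖ψ t x‖ ^ 2 = P x ^ 2 := by
    rw [h1]
    calc Real.exp (2 * t ^ 2) * (P x * Real.exp (-(t ^ 2))) ^ 2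
        = P x ^ 2 * (Real.exp (2 * t ^ 2) * (Real.exp (-(t ^ 2)) * Real.exp (-(t ^ 2)))) := by ring
      _ = P x ^ 2 * Real.exp (2 * t ^ 2 + (-(t ^ 2) + -(t ^ 2))) := by
          rw [Real.exp_add, Real.exp_add]
      _ = P x ^ 2 := by
          rw [show 2 * t ^ 2 + (-(t ^ 2) + -(t ^ 2)) = 0 by ring, Real.exp_zero, mul_one]
  have habsC : (3 : ℂ) * ((Real.exp (2 * t ^ 2) : ℝ) : ℂ) * ((‖ψ t x‖ ^ 2 : ℝ) : ℂ)
      = 3 * ((P x : ℝ) : ℂ) ^ 2 := by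
    have h := congrArg (fun r : ℝ => ((r : ℝ) : ℂ)) habs
    push_cast at h
    push_cast
    linear_combination 3 * h
  have hcs : c ^ 2 = 2 * s ^ 2 / 3 := by rw [hc2, hs2]; ring
  have hsh2 : Real.sinh (s * x) ^ 2 = Real.cosh (s * x) ^ 2 - 1 := Real.sinh_sq _
  have e2 : P2 = -v * P x - 3 * P x ^ 3 := by
    rw [hP2]
    simp only [hP]
    rw [← hs2]
    field_simp
    ring_nf
    linear_combination (2 * c * s ^ 2) * hsh2
      + (3 * c) * hcs
  have e2C : ((P2 : ℝ) : ℂ) = -((v : ℝ) : ℂ) * ((P x : ℝ) : ℂ) - 3 * ((P x : ℝ) : ℂ) ^ 3 := by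
    rw [e2]; push_cast; ring
  have hψval : ψ t x = ((P x : ℝ) : ℂ) * E t x := hψ t x
  rw [hψtd.deriv, hderiv1, hD2.deriv, (hDd x).deriv, mul_assoc (3 : ℂ), ← mul_assoc (3 : ℂ),
    habsC, hψval, e2C]
  simp only [hD]
  rw [show ((x / 2 * Real.sin t : ℝ) : ℂ) = (x : ℂ) / 2 * Complex.sin (t : ℂ) by push_cast; ring]
  push_cast
  linear_combination (((P x : ℝ) : ℂ) * E t x *
    ((x : ℂ) ^ 2 / 4 * Complex.cos (t : ℂ) - ((v : ℝ) : ℂ)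
      - (x : ℂ) ^ 2 * Complex.sin (t : ℂ) ^ 2 / 4)) * Complex.I_sq
end
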